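/- arXiv:0811.1521 — 2 statements merged into one kernel-verified Lean document; each statement's English description precedes it below -/
import Mathlib

section
/- Let ∅ ≠ A ⊆ R̃^d be internal and sharply bounded, let (A_ε)_ε be a sharply bounded representative of A, and let u = [(u_ε)_ε] ∈ G̃(A). The following are equivalent: (1) there exists v ∈ G̃(A) with uv = 1 in G̃(A); (2) for every x̃ ∈ A, the point value u(x̃) is invertible in the ring C̃; (3) there exist ε_0 ∈ (0,1) and n ∈ ℕ such that for all ε ≤ ε_0, inf_{x ∈ A_ε + ε^n} |u_ε(x)| ≥ ε^n (where A + r denotes {x : d(x,A) ≤ r}). -/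
open Real Set Metric MeasureTheory Filter

noncomputable section

/-- `P ε` holds for all sufficiently small `ε ∈ (0,1)`. -/
def EvSmall (P : ℝ → Prop) : Prop :=
  ∃ ε₀ : ℝ, 0 < ε₀ ∧ ε₀ < 1 ∧ ∀ ε : ℝ, 0 < ε → ε ≤ ε₀ → P ε

/-- A net `(u_ε)` with values in a seminormed group is moderate. -/
def Moderate {E : Type*} [SeminormedAddGroup E] (u : ℝ → E) : Prop :=
  ∃ N : ℕ, EvSmall fun ε => ‖u ε‖ ≤ ε ^ (-(N : ℝ))

/-- A net `(u_ε)` is negligible. -/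
def Negligible {E : Type*} [SeminormedAddGroup E] (u : ℝ → E) : Prop :=
  ∀ m : ℕ, EvSmall fun ε => ‖u ε‖ ≤ ε ^ (m : ℝ)

/-- Two nets represent the same generalized point. -/
def EqvNet {E : Type*} [SeminormedAddGroup E] (x y : ℝ → E) : Prop :=
  Negligible fun ε => x ε - y ε

/-- The set of generalized points of `Ẽ` (modelled as the moderate nets). -/
def GenPt (E : Type*) [SeminormedAddGroup E] : Set (ℝ → E) := {x | Moderate x}

/-- `x` is a representative of some generalized point belonging to `A`. -/
def IsReprOfPointOf {E : Type*} [SeminormedAddGroup E] (A : Set (ℝ → E)) (x : ℝ → E) : Prop :=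
  Moderate x ∧ ∃ a ∈ A, EqvNet x a

/-- The sharp norm `e^{-v(x)}` of a (moderate) net. -/
noncomputable def sharpNorm {E : Type*} [SeminormedAddGroup E] (x : ℝ → E) : ℝ :=
  sInf {r : ℝ | ∃ b : ℝ, r = Real.exp (-b) ∧ EvSmall fun ε => ‖x ε‖ ≤ ε ^ b}

/-- `A` is open for the sharp topology (as a set of generalized points). -/
def SharpOpen {E : Type*} [SeminormedAddGroup E] (A : Set (ℝ → E)) : Prop :=
  (∀ x ∈ A, Moderate x) ∧
  ∀ x ∈ A, ∃ r > 0, ∀ y : ℝ → E, Moderate y →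
    sharpNorm (fun ε => y ε - x ε) < r → y ∈ A

/-- `B` is a sharp neighbourhood of `A`. -/
def IsSharpNbhdOf {E : Type*} [SeminormedAddGroup E] (B A : Set (ℝ → E)) : Prop :=
  A ⊆ B ∧ ∀ x ∈ A, ∃ r > 0, ∀ y : ℝ → E, Moderate y →
    sharpNorm (fun ε => y ε - x ε) < r → y ∈ B

/-- The internal set with representative `(Aε)`. -/
def InternalSet {E : Type*} [SeminormedAddGroup E] (Aε : ℝ → Set E) : Set (ℝ → E) :=
  {x | Moderate x ∧ ∃ y : ℝ → E, EqvNet x y ∧ EvSmall fun ε => y ε ∈ Aε ε}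

/-- `(Aε)` is a sharply bounded representative. -/
def SharplyBddRep {E : Type*} [SeminormedAddGroup E] (Aε : ℝ → Set E) : Prop :=
  ∃ M : ℕ, EvSmall fun ε => ∀ x ∈ Aε ε, ‖x‖ ≤ ε ^ (-(M : ℝ))

/-- A set of generalized points is sharply bounded. -/
def SharplyBddSet {E : Type*} [SeminormedAddGroup E] (A : Set (ℝ → E)) : Prop :=
  ∃ C : ℝ, ∀ x ∈ A, sharpNorm x ≤ C

/-- The interleaved closure of a set of generalized points. -/
def interleaved {E : Type*} [SeminormedAddGroup E] (A : Set (ℝ → E)) : Set (ℝ → E) :=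
  {x | ∃ (m : ℕ) (S : Fin m → Set ℝ) (y : Fin m → ℝ → E),
    (∀ ε ∈ Set.Ioo (0:ℝ) 1, ∃! j, ε ∈ S j) ∧ (∀ j, y j ∈ A) ∧
    ∀ ε ∈ Set.Ioo (0:ℝ) 1, ∀ j, ε ∈ S j → x ε = y j ε}

/-- A net of smooth functions (smooth for each ε ∈ (0,1)). -/
def SmoothNet {V : Type*} [NormedAddCommGroup V] [NormedSpace ℝ V] (u : ℝ → V → ℂ) : Prop :=
  ∀ ε : ℝ, 0 < ε → ε < 1 → ContDiff ℝ (⊤ : ℕ∞) (u ε)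

/-- The nets belonging to `E_M(A)` : all derivatives are moderate along the points of `A`. -/
def EMod {V : Type*} [NormedAddCommGroup V] [NormedSpace ℝ V]
    (A : Set (ℝ → V)) (u : ℝ → V → ℂ) : Prop :=
  SmoothNet u ∧ ∀ (n : ℕ) (x : ℝ → V), IsReprOfPointOf A x →
    Moderate fun ε => iteratedFDeriv ℝ n (u ε) (x ε)

/-- The nets belonging to `N(A)` : all derivatives are negligible along the points of `A`. -/
def NNeg {V : Type*} [NormedAddCommGroup V] [NormedSpace ℝ V]
    (A : Set (ℝ → V)) (u : ℝ → V → ℂ) : Prop :=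
  SmoothNet u ∧ ∀ (n : ℕ) (x : ℝ → V), IsReprOfPointOf A x →
    Negligible fun ε => iteratedFDeriv ℝ n (u ε) (x ε)

/-- `u` and `v` define the same element of `G̃(A)`. -/
def GEq {V : Type*} [NormedAddCommGroup V] [NormedSpace ℝ V]
    (A : Set (ℝ → V)) (u v : ℝ → V → ℂ) : Prop :=
  NNeg A fun ε z => u ε z - v ε z

/-- `x̃ ≤ ỹ` in `R̃` (for the given representatives). -/
def RleNet (x y : ℝ → ℝ) : Prop := ∀ m : ℕ, EvSmall fun ε => x ε ≤ y ε + ε ^ (m : ℝ)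

/-- `x̃ ≫ 0` in `R̃`. -/
def StrPosNet (x : ℝ → ℝ) : Prop := ∃ m : ℕ, EvSmall fun ε => ε ^ (m : ℝ) ≤ x ε

/-- `x̃ ≪ ỹ` in `R̃`. -/
def RltlNet (x y : ℝ → ℝ) : Prop := StrPosNet fun ε => y ε - x ε

/-- The operator `∂̄ = ½(∂ₓ + i ∂_y)` on smooth functions `ℂ → ℂ`. -/
def dbar (u : ℂ → ℂ) (z : ℂ) : ℂ :=
  (fderiv ℝ u z 1 + Complex.I * fderiv ℝ u z Complex.I) / 2

/-- The iterated derivative `D^k u = ∂ₓ^k u`. -/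
def Dpow : ℕ → (ℂ → ℂ) → ℂ → ℂ
  | 0, u => u
  | (k+1), u => Dpow k fun z => fderiv ℝ u z 1

/-- `u ∈ G̃_H(A)` : generalized holomorphic functions on `A ⊆ C̃`. -/
def GHol (A : Set (ℝ → ℂ)) (u : ℝ → ℂ → ℂ) : Prop :=
  EMod A u ∧ NNeg A fun ε => dbar (u ε)

/-- A continuous, piecewise `C¹` function on `[0,1]` (with its partition). -/
structure PwC1Path where
  toFun : ℝ → ℂ
  n : ℕ
  pt : Fin (n + 1) → ℝ
  mono : Monotone pt
  first : pt 0 = 0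
  last : pt (Fin.last n) = 1
  cont : ContinuousOn toFun (Set.Icc 0 1)
  piece : ∀ i : Fin n, ContDiffOn ℝ 1 toFun (Set.Icc (pt i.castSucc) (pt i.succ))

/-- A net of piecewise `C¹` paths which is moderate for the `C¹_pw` norm. -/
def PathModerate (γ : ℝ → PwC1Path) : Prop :=
  (∃ N : ℕ, EvSmall fun ε => ∀ t ∈ Set.Icc (0:ℝ) 1, ‖(γ ε).toFun t‖ ≤ ε ^ (-(N:ℝ))) ∧
  (∃ N : ℕ, EvSmall fun ε => ∀ᵐ t ∂(volume.restrict (Set.Icc (0:ℝ) 1)),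
      ‖deriv (γ ε).toFun t‖ ≤ ε ^ (-(N:ℝ)))

/-- Two nets of paths represent the same generalized path
(their difference is negligible for the `C¹_pw` norm). -/
def PathEqv (γ γ' : ℝ → PwC1Path) : Prop :=
  ∀ m : ℕ, EvSmall fun ε =>
    (∀ t ∈ Set.Icc (0:ℝ) 1, ‖(γ ε).toFun t - (γ' ε).toFun t‖ ≤ ε ^ (m:ℝ)) ∧
    (∀ᵐ t ∂(volume.restrict (Set.Icc (0:ℝ) 1)),
      ‖deriv (γ ε).toFun t - deriv (γ' ε).toFun t‖ ≤ ε ^ (m:ℝ))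

/-- `γ` is a (generalized) path in `A ⊆ C̃`. -/
def PathIn (A : Set (ℝ → ℂ)) (γ : ℝ → PwC1Path) : Prop :=
  PathModerate γ ∧ ∀ t : ℝ → ℝ, (∀ ε, t ε ∈ Set.Icc (0:ℝ) 1) →
    IsReprOfPointOf A fun ε => (γ ε).toFun (t ε)

/-- The complex path integral `∫_γ u(z) dz` along a piecewise `C¹` path. -/
noncomputable def pathIntegral (γ : PwC1Path) (u : ℂ → ℂ) : ℂ :=
  ∑ i : Fin γ.n, ∫ t in (γ.pt i.castSucc)..(γ.pt i.succ),
    u (γ.toFun t) * derivWithin γ.toFun (Set.Icc (γ.pt i.castSucc) (γ.pt i.succ)) t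

/-- The path is closed: `γ(0) = γ(1)` as generalized points. -/
def ClosedPath (γ : ℝ → PwC1Path) : Prop :=
  Negligible fun ε => (γ ε).toFun 1 - (γ ε).toFun 0

/-- A continuous, piecewise `C¹` function on `[0,1]²` (with its grid partition). -/
structure PwC1Homotopy where
  toFun : ℝ × ℝ → ℂ
  n : ℕ
  pt : Fin (n + 1) → ℝ
  mono : Monotone pt
  first : pt 0 = 0
  last : pt (Fin.last n) = 1
  cont : ContinuousOn toFun (Set.Icc 0 1 ×ˢ Set.Icc 0 1)
  piece : ∀ i j : Fin n, ContDiffOn ℝ 1 toFun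
    (Set.Icc (pt i.castSucc) (pt i.succ) ×ˢ Set.Icc (pt j.castSucc) (pt j.succ))

/-- A moderate net of piecewise `C¹` functions on the square. -/
def HomotopyModerate (H : ℝ → PwC1Homotopy) : Prop :=
  (∃ N : ℕ, EvSmall fun ε => ∀ p ∈ (Set.Icc (0:ℝ) 1 ×ˢ Set.Icc (0:ℝ) 1),
      ‖(H ε).toFun p‖ ≤ ε ^ (-(N:ℝ))) ∧
  (∃ N : ℕ, EvSmall fun ε =>
      ∀ᵐ p ∂(volume.restrict ((Set.Icc (0:ℝ) 1 ×ˢ Set.Icc (0:ℝ) 1) : Set (ℝ × ℝ))),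
      ‖fderiv ℝ (H ε).toFun p‖ ≤ ε ^ (-(N:ℝ)))

/-- `H` is a homotopy in `A` between the closed paths `γ` and `γ'`. -/
def IsHomotopyBetween (A : Set (ℝ → ℂ)) (γ γ' : ℝ → PwC1Path)
    (H : ℝ → PwC1Homotopy) : Prop :=
  HomotopyModerate H ∧
  (∀ t : ℝ → ℝ, (∀ ε, t ε ∈ Set.Icc (0:ℝ) 1) →
    (Negligible fun ε => (H ε).toFun (t ε, 0) - (γ ε).toFun (t ε)) ∧
    (Negligible fun ε => (H ε).toFun (t ε, 1) - (γ' ε).toFun (t ε))) ∧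
  (∀ s : ℝ → ℝ, (∀ ε, s ε ∈ Set.Icc (0:ℝ) 1) →
    Negligible fun ε => (H ε).toFun (0, s ε) - (H ε).toFun (1, s ε)) ∧
  (∀ t s : ℝ → ℝ, (∀ ε, t ε ∈ Set.Icc (0:ℝ) 1) → (∀ ε, s ε ∈ Set.Icc (0:ℝ) 1) →
    IsReprOfPointOf A fun ε => (H ε).toFun (t ε, s ε))

/-! ### Auxiliary machinery for the proof -/

section Aux

lemma EvSmall.and {P Q : ℝ → Prop} (hP : EvSmall P) (hQ : EvSmall Q) :
    EvSmall fun ε => P ε ∧ Q ε := by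
  obtain ⟨a, ha0, ha1, hPa⟩ := hP
  obtain ⟨b, hb0, hb1, hQb⟩ := hQ
  exact ⟨min a b, lt_min ha0 hb0, lt_of_le_of_lt (min_le_left _ _) ha1,
    fun ε hε hε' => ⟨hPa ε hε (hε'.trans (min_le_left _ _)),
      hQb ε hε (hε'.trans (min_le_right _ _))⟩⟩

lemma EvSmall.mono {P Q : ℝ → Prop} (h : EvSmall P)
    (h2 : ∀ ε, 0 < ε → ε < 1 → P ε → Q ε) : EvSmall Q := by
  obtain ⟨a, ha0, ha1, hPa⟩ := h
  exact ⟨a, ha0, ha1, fun ε hε hε' => h2 ε hε (lt_of_le_of_lt hε' ha1) (hPa ε hε hε')⟩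

lemma evSmall_le {c : ℝ} (hc : 0 < c) : EvSmall fun ε => ε ≤ c := by
  refine ⟨min c (1/2), lt_min hc (by norm_num), lt_of_le_of_lt (min_le_right _ _) (by norm_num),
    fun ε hε hε' => hε'.trans (min_le_left _ _)⟩

lemma evSmall_half : EvSmall fun ε => ε ≤ 1/2 := evSmall_le (by norm_num)

/-- A net of reals admits a `ε^{-N}` bound. -/
def MB (c : ℝ → ℝ) : Prop := ∃ N : ℕ, EvSmall fun ε => c ε ≤ ε ^ (-(N : ℝ))

lemma moderate_iff_MB {E : Type*} [SeminormedAddGroup E] (u : ℝ → E) :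
    Moderate u ↔ MB fun ε => ‖u ε‖ := Iff.rfl

lemma MB.of_le {c c' : ℝ → ℝ} (h : MB c') (hle : EvSmall fun ε => c ε ≤ c' ε) : MB c := by
  obtain ⟨N, hN⟩ := h
  exact ⟨N, (hle.and hN).mono fun ε _ _ hh => hh.1.trans hh.2⟩

lemma MB_const (C : ℝ) : MB fun _ => C := by
  refine ⟨1, (evSmall_le (show (0:ℝ) < (max C 1)⁻¹ by positivity)).mono fun ε hε hε1 hh => ?_⟩
  have h1 : (max C 1) ≤ ε⁻¹ := by
    rw [le_inv_comm₀ (by positivity) hε]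
    exact hh
  calc C ≤ max C 1 := le_max_left _ _
    _ ≤ ε⁻¹ := h1
    _ = ε ^ (-(1:ℕ) : ℝ) := by
        rw [show (-(1:ℕ) : ℝ) = (-1 : ℝ) by norm_num, Real.rpow_neg_one]

lemma MB.mul {c c' : ℝ → ℝ} (h : MB c) (h' : MB c')
    (hc : ∀ ε, 0 ≤ c ε) (hc' : ∀ ε, 0 ≤ c' ε) :
    MB fun ε => c ε * c' ε := by
  obtain ⟨N, hN⟩ := h
  obtain ⟨M, hM⟩ := h'
  refine ⟨N + M, (hN.and hM).mono fun ε hε hε1 hh => ?_⟩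
  calc c ε * c' ε ≤ ε ^ (-(N:ℝ)) * ε ^ (-(M:ℝ)) :=
        mul_le_mul hh.1 hh.2 (hc' ε) (by positivity)
    _ = ε ^ (-((N + M : ℕ) : ℝ)) := by
        rw [← Real.rpow_add hε]; congr 1; push_cast; ring

lemma MB.add {c c' : ℝ → ℝ} (h : MB c) (h' : MB c') : MB fun ε => c ε + c' ε := by
  obtain ⟨N, hN⟩ := h
  obtain ⟨M, hM⟩ := h'
  refine ⟨max N M + 1, ((hN.and hM).and evSmall_half).mono fun ε hε hε1 hh => ?_⟩
  have hNle : ε ^ (-(N:ℝ)) ≤ ε ^ (-((max N M : ℕ):ℝ)) :=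
    Real.rpow_le_rpow_of_exponent_ge hε hε1.le (by
      simp only [neg_le_neg_iff, Nat.cast_le]; exact le_max_left _ _)
  have hMle : ε ^ (-(M:ℝ)) ≤ ε ^ (-((max N M : ℕ):ℝ)) :=
    Real.rpow_le_rpow_of_exponent_ge hε hε1.le (by
      simp only [neg_le_neg_iff, Nat.cast_le]; exact le_max_right _ _)
  have h2 : (2:ℝ) ≤ ε⁻¹ := by
    rw [show (2:ℝ) = (1/2)⁻¹ by norm_num]
    exact inv_anti₀ hε hh.2
  calc c ε + c' ε ≤ ε ^ (-((max N M : ℕ):ℝ)) + ε ^ (-((max N M : ℕ):ℝ)) :=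
        add_le_add (hh.1.1.trans hNle) (hh.1.2.trans hMle)
    _ = 2 * ε ^ (-((max N M : ℕ):ℝ)) := by ring
    _ ≤ ε⁻¹ * ε ^ (-((max N M : ℕ):ℝ)) := by
        apply mul_le_mul_of_nonneg_right h2 (Real.rpow_pos_of_pos hε _).le
    _ = ε ^ (-((max N M + 1 : ℕ):ℝ)) := by
        rw [← Real.rpow_neg_one ε, ← Real.rpow_add hε]
        congr 1
        push_cast
        ring

lemma evSmall_of_all {P : ℝ → Prop} (h : ∀ ε, 0 < ε → ε < 1 → P ε) : EvSmall P :=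
  evSmall_half.mono fun ε h0 h1 _ => h ε h0 h1

lemma MB.finset_sum {ι : Type*} (s : Finset ι) (f : ι → ℝ → ℝ)
    (h : ∀ i ∈ s, MB (f i)) : MB fun ε => ∑ i ∈ s, f i ε := by
  classical
  induction s using Finset.induction_on with
  | empty => simpa using MB_const 0
  | @insert a s' hi ih =>
    simp only [Finset.sum_insert hi]
    exact (h a (Finset.mem_insert_self a s')).add
      (ih fun i hi' => h i (Finset.mem_insert_of_mem hi'))

/-- Negligible-type bounds for real nets. -/
def NB (c : ℝ → ℝ) : Prop := ∀ m : ℕ, EvSmall fun ε => c ε ≤ ε ^ (m : ℝ)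

lemma negligible_iff_NB {E : Type*} [SeminormedAddGroup E] (u : ℝ → E) :
    Negligible u ↔ NB fun ε => ‖u ε‖ := Iff.rfl

lemma NB.of_le {c c' : ℝ → ℝ} (h : NB c') (hle : EvSmall fun ε => c ε ≤ c' ε) : NB c :=
  fun m => (hle.and (h m)).mono fun ε _ _ hh => hh.1.trans hh.2

lemma NB.add {c c' : ℝ → ℝ} (h : NB c) (h' : NB c') : NB fun ε => c ε + c' ε := by
  intro m
  refine ((h (m+1)).and ((h' (m+1)).and evSmall_half)).mono fun ε hε hε1 hh => ?_
  have hm1 : ε ^ ((m+1 : ℕ) : ℝ) = ε * ε ^ (m : ℝ) := by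
    rw [show ((m+1:ℕ):ℝ) = (m:ℝ) + 1 by push_cast; ring, Real.rpow_add hε, Real.rpow_one]
    ring
  have h2 : 0 ≤ ε ^ (m:ℝ) := (Real.rpow_pos_of_pos hε _).le
  calc c ε + c' ε ≤ ε ^ ((m+1:ℕ):ℝ) + ε ^ ((m+1:ℕ):ℝ) := add_le_add hh.1 hh.2.1
    _ = 2 * ε * ε ^ (m:ℝ) := by rw [hm1]; ring
    _ ≤ 1 * ε ^ (m:ℝ) := by
        apply mul_le_mul_of_nonneg_right _ h2
        linarith [hh.2.2]
    _ = ε ^ (m:ℝ) := one_mul _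

lemma EqvNet.trans' {E : Type*} [SeminormedAddGroup E] {x y z : ℝ → E}
    (h1 : EqvNet x y) (h2 : EqvNet y z) : EqvNet x z := by
  rw [EqvNet, negligible_iff_NB]
  refine (NB.add (c := fun ε => ‖x ε - y ε‖) (c' := fun ε => ‖y ε - z ε‖) h1 h2).of_le
    (evSmall_of_all fun ε _ _ => ?_)
  simpa using norm_sub_le_norm_sub_add_norm_sub (x ε) (y ε) (z ε)

lemma eqvNet_refl {E : Type*} [SeminormedAddGroup E] (x : ℝ → E) : EqvNet x x := by
  intro m
  exact evSmall_of_all fun ε h0 h1 => by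
    simp only [sub_self, norm_zero]
    positivity

/-- Points of an internal set are (negligibly) close to the sets `Aε`. -/
lemma repr_near {V : Type*} [NormedAddCommGroup V] {Aε : ℝ → Set V} {x : ℝ → V}
    (hx : IsReprOfPointOf (InternalSet Aε) x) :
    ∃ y : ℝ → V, (EvSmall fun ε => y ε ∈ Aε ε) ∧ NB fun ε => ‖x ε - y ε‖ := by
  obtain ⟨hxm, a, ha, hxa⟩ := hx
  obtain ⟨ham, y, hay, hy⟩ := ha
  exact ⟨y, hy, (negligible_iff_NB _).mp (hxa.trans' hay)⟩

/-! ### The smooth cut-off inversion on `ℂ` -/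

noncomputable def psiAux (t : ℝ) : ℝ := Real.smoothTransition (2 * t - 1)

lemma psiAux_contDiff : ContDiff ℝ (⊤:ℕ∞) psiAux :=
  Real.smoothTransition.contDiff.comp ((contDiff_const.mul contDiff_id).sub contDiff_const)

lemma psiAux_zero {t : ℝ} (h : t ≤ 1/2) : psiAux t = 0 :=
  Real.smoothTransition.zero_of_nonpos (by linarith)

lemma psiAux_one {t : ℝ} (h : 1 ≤ t) : psiAux t = 1 :=
  Real.smoothTransition.one_of_one_le (by linarith)

noncomputable def chiAux (δ : ℝ) (w : ℂ) : ℂ := (psiAux (‖w‖^2 / δ^2)) • w⁻¹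

lemma chiAux_eq_inv {δ : ℝ} (hδ : 0 < δ) {w : ℂ} (hw : δ ≤ ‖w‖) : chiAux δ w = w⁻¹ := by
  have h1 : (1:ℝ) ≤ ‖w‖^2/δ^2 := by
    rw [le_div_iff₀ (by positivity)]
    nlinarith [norm_nonneg w]
  rw [chiAux, psiAux_one h1, one_smul]

lemma chiAux_contDiff {δ : ℝ} (hδ : 0 < δ) : ContDiff ℝ (⊤:ℕ∞) (chiAux δ) := by
  rw [contDiff_iff_contDiffAt]
  intro w
  rcases lt_or_ge (‖w‖^2) (δ^2/2) with h | h
  · have hopen : IsOpen {z : ℂ | ‖z‖^2 < δ^2/2} :=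
      isOpen_lt (by fun_prop) continuous_const
    have hev : chiAux δ =ᶠ[nhds w] (fun _ => (0:ℂ)) := by
      filter_upwards [hopen.mem_nhds h] with z hz
      have hz2 : ‖z‖^2/δ^2 ≤ 1/2 := by
        rw [div_le_iff₀ (by positivity)]
        linarith
      show (psiAux (‖z‖^2 / δ^2)) • z⁻¹ = 0
      rw [psiAux_zero hz2, zero_smul]
    exact (contDiffAt_const (c := (0:ℂ))).congr_of_eventuallyEq hev
  · have hw : w ≠ 0 := by
      intro h0
      rw [h0] at h
      simp only [norm_zero] at h
      nlinarith
    exact ContDiffAt.smul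
      ((psiAux_contDiff.comp ((contDiff_norm_sq ℝ).div_const _)).contDiffAt)
      (contDiffAt_inv ℝ hw)

lemma iteratedFDeriv_congr_isOpen {V F : Type*} [NormedAddCommGroup V] [NormedSpace ℝ V]
    [NormedAddCommGroup F] [NormedSpace ℝ F] {f g : V → F} {s : Set V} (hs : IsOpen s)
    {x : V} (hx : x ∈ s) (h : Set.EqOn f g s) (n : ℕ) :
    iteratedFDeriv ℝ n f x = iteratedFDeriv ℝ n g x := by
  rw [← iteratedFDerivWithin_of_isOpen n hs hx, iteratedFDerivWithin_congr h hx,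
    iteratedFDerivWithin_of_isOpen n hs hx]

/-! ### The three main implications -/

lemma lemma_one_imp_two {V : Type*} [NormedAddCommGroup V] [NormedSpace ℝ V]
    (A : Set (ℝ → V)) (u : ℝ → V → ℂ)
    (h1 : ∃ v : ℝ → V → ℂ, EMod A v ∧
      GEq A (fun ε z => u ε z * v ε z) (fun _ _ => 1)) :
    ∀ x : ℝ → V, IsReprOfPointOf A x →
      ∃ w : ℝ → ℂ, Moderate w ∧ Negligible fun ε => u ε (x ε) * w ε - 1 := by
  obtain ⟨v, hv, hGEq⟩ := h1
  intro x hx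
  refine ⟨fun ε => v ε (x ε), ?_, ?_⟩
  · have h0 := hv.2 0 x hx
    rw [moderate_iff_MB] at h0 ⊢
    exact h0.of_le (evSmall_of_all fun ε _ _ => by rw [norm_iteratedFDeriv_zero])
  · have h0 := hGEq.2 0 x hx
    rw [negligible_iff_NB] at h0 ⊢
    exact h0.of_le (evSmall_of_all fun ε _ _ => by rw [norm_iteratedFDeriv_zero])

lemma lemma_two_imp_three {V : Type*} [NormedAddCommGroup V] [NormedSpace ℝ V]
    (Aε : ℝ → Set V) (hne : (InternalSet Aε).Nonempty) (hbd : SharplyBddRep Aε)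
    (u : ℝ → V → ℂ)
    (h2 : ∀ x : ℝ → V, IsReprOfPointOf (InternalSet Aε) x →
      ∃ w : ℝ → ℂ, Moderate w ∧ Negligible fun ε => u ε (x ε) * w ε - 1) :
    ∃ ε₀ : ℝ, 0 < ε₀ ∧ ε₀ < 1 ∧ ∃ n : ℕ, ∀ ε : ℝ, 0 < ε → ε ≤ ε₀ →
      ∀ x ∈ Metric.cthickening (ε ^ (n : ℝ)) (Aε ε), ε ^ (n : ℝ) ≤ ‖u ε x‖ := by
  classical
  by_contra hcon
  push_neg at hcon
  have h3' : ∀ b : ℝ, 0 < b → ∀ n : ℕ, ∃ ε : ℝ, (0 < ε ∧ ε ≤ min b (1/2)) ∧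
      ∃ x, x ∈ Metric.cthickening (ε ^ (n:ℝ)) (Aε ε) ∧ ‖u ε x‖ < ε ^ (n:ℝ) := by
    intro b hb n
    obtain ⟨ε, hε0, hε1, x, hx1, hx2⟩ := hcon (min b (1/2)) (lt_min hb (by norm_num))
      (lt_of_le_of_lt (min_le_right _ _) (by norm_num)) n
    exact ⟨ε, ⟨hε0, hε1⟩, x, hx1, hx2⟩
  choose e' he' X' hX1 hX2 using h3'
  let step : ℕ → ℝ → ℝ × V := fun k b =>
    if hb : 0 < b then (e' b hb (k+1), X' b hb (k+1)) else (1, 0)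
  let seq : ℕ → ℝ × V := fun k =>
    Nat.rec ((e' (1/2) one_half_pos 0, X' (1/2) one_half_pos 0)) (fun k ih => step k (ih.1/2)) k
  have hstep' : ∀ (k : ℕ) (b : ℝ) (hb : 0 < b), step k b = (e' b hb (k+1), X' b hb (k+1)) :=
    fun k b hb => dif_pos hb
  have hseq : ∀ k, seq (k+1) = step k ((seq k).1/2) := fun k => rfl
  have hseq0 : seq 0 = (e' (1/2) one_half_pos 0, X' (1/2) one_half_pos 0) := rfl
  have hmain : ∀ k, 0 < (seq k).1 ∧ (seq k).1 ≤ (1/2)^(k+1) ∧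
      (seq k).2 ∈ Metric.cthickening ((seq k).1 ^ (k:ℝ)) (Aε (seq k).1) ∧
      ‖u (seq k).1 (seq k).2‖ < (seq k).1 ^ (k:ℝ) := by
    intro k
    induction k with
    | zero =>
      rw [hseq0]
      refine ⟨(he' _ _ _).1, ?_, hX1 _ _ _, hX2 _ _ _⟩
      simpa using ((he' (1/2) one_half_pos 0).2.trans (min_le_right _ _))
    | succ k ih =>
      have hb : 0 < (seq k).1/2 := half_pos ih.1
      rw [hseq k, hstep' k _ hb]
      refine ⟨(he' _ _ _).1, ?_, hX1 _ _ _, hX2 _ _ _⟩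
      have h1 := (he' ((seq k).1/2) hb (k+1)).2
      calc e' ((seq k).1/2) hb (k+1) ≤ min ((seq k).1/2) (1/2) := h1
        _ ≤ (seq k).1/2 := min_le_left _ _
        _ ≤ (1/2)^(k+1)/2 := by linarith [ih.2.1]
        _ = (1/2)^(k+1+1) := by ring
  have hdec : ∀ k, (seq (k+1)).1 ≤ (seq k).1 / 2 := by
    intro k
    have hb : 0 < (seq k).1/2 := half_pos (hmain k).1
    rw [hseq k, hstep' k _ hb]
    exact ((he' _ _ _).2).trans (min_le_left _ _)
  have hpos : ∀ k, 0 < (seq k).1 := fun k => (hmain k).1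
  have hstrict : StrictAnti (fun k => (seq k).1) :=
    strictAnti_nat_of_succ_lt fun k => lt_of_le_of_lt (hdec k) (by linarith [hpos k])
  have hinj : Function.Injective (fun k => (seq k).1) := hstrict.injective
  have hhalf1 : ∀ k, (seq k).1 ≤ 1/2 := by
    intro k
    refine le_trans (hmain k).2.1 ?_
    calc ((1:ℝ)/2)^(k+1) ≤ (1/2)^1 :=
          pow_le_pow_of_le_one (by norm_num) (by norm_num) (by omega)
      _ = 1/2 := pow_one _
  have hord : ∀ m k : ℕ, (seq k).1 ≤ (seq m).1 → m ≤ k := by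
    intro m k h
    by_contra hlt
    push_neg at hlt
    have := hstrict hlt
    simp only at this
    linarith
  -- default point
  obtain ⟨a, ha⟩ := hne
  obtain ⟨haM, y0, hay0, hy0⟩ := ha
  -- nearest points to the bad points
  have hnear : ∀ k, ∃ yk, yk ∈ Aε ((seq k).1) ∧
      dist ((seq k).2) yk ≤ 2 * ((seq k).1) ^ (k:ℝ) := by
    intro k
    have h1 := (hmain k).2.2.1
    rw [Metric.mem_cthickening_iff] at h1
    have hp : (0:ℝ) < ((seq k).1) ^ (k:ℝ) := Real.rpow_pos_of_pos (hpos k) _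
    have h2 : EMetric.infEdist ((seq k).2) (Aε ((seq k).1)) <
        ENNReal.ofReal (2 * ((seq k).1) ^ (k:ℝ)) :=
      lt_of_le_of_lt h1 (by rw [ENNReal.ofReal_lt_ofReal_iff (by linarith)]; linarith)
    obtain ⟨yk, hyk, hd⟩ := EMetric.infEdist_lt_iff.mp h2
    exact ⟨yk, hyk, (edist_lt_ofReal.mp hd).le⟩
  choose near hnear1 hnear2 using hnear
  -- the interleaved nets
  set x : ℝ → V := fun ε => if h : ∃ k, (seq k).1 = ε then (seq h.choose).2 else y0 ε with hxdef
  set y : ℝ → V := fun ε => if h : ∃ k, (seq k).1 = ε then near h.choose else y0 ε with hydef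
  have hxk : ∀ k, x ((seq k).1) = (seq k).2 := by
    intro k
    have h : ∃ j, (seq j).1 = (seq k).1 := ⟨k, rfl⟩
    have hch : h.choose = k := hinj h.choose_spec
    simp only [hxdef, dif_pos h, hch]
  have hyk : ∀ k, y ((seq k).1) = near k := by
    intro k
    have h : ∃ j, (seq j).1 = (seq k).1 := ⟨k, rfl⟩
    have hch : h.choose = k := hinj h.choose_spec
    simp only [hydef, dif_pos h, hch]
  -- moderateness of x
  obtain ⟨M, hM⟩ := hbd
  have hxmod : Moderate x := by
    refine ⟨M+1, ((hM.and hy0).and (evSmall_le (show (0:ℝ)<1/3 by norm_num))).mono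
      fun ε hε hε1 hh => ?_⟩
    obtain ⟨⟨hMε, hy0ε⟩, hε3⟩ := hh
    have hone : (1:ℝ) ≤ ε ^ (-(M:ℝ)) := by
      rw [show (1:ℝ) = ε ^ (0:ℝ) by rw [Real.rpow_zero]]
      exact Real.rpow_le_rpow_of_exponent_ge hε hε1.le (by simp)
    have hstepb : ε ^ (-(M:ℝ)) + 2 ≤ ε ^ (-((M+1:ℕ):ℝ)) := by
      have h3 : (3:ℝ) ≤ ε⁻¹ := by
        rw [show (3:ℝ) = (1/3:ℝ)⁻¹ by norm_num]
        exact inv_anti₀ hε hε3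
      have heq : ε ^ (-((M+1:ℕ):ℝ)) = ε⁻¹ * ε ^ (-(M:ℝ)) := by
        rw [← Real.rpow_neg_one ε, ← Real.rpow_add hε]
        congr 1
        push_cast
        ring
      rw [heq]
      nlinarith [Real.rpow_pos_of_pos hε (-(M:ℝ))]
    by_cases h : ∃ k, (seq k).1 = ε
    · obtain ⟨k, hk⟩ := h
      have hxe : x ε = (seq k).2 := by rw [← hk]; exact hxk k
      show ‖x ε‖ ≤ ε ^ (-((M+1:ℕ):ℝ))
      rw [hxe]
      have hnear1' : near k ∈ Aε ε := hk ▸ hnear1 k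
      have hb1 : ‖near k‖ ≤ ε ^ (-(M:ℝ)) := hMε _ (hk ▸ hnear1 k)
      have hb2 : dist ((seq k).2) (near k) ≤ 2 * ε ^ (k:ℝ) := by
        rw [← hk]; exact hnear2 k
      have hb3 : ε ^ (k:ℝ) ≤ 1 := Real.rpow_le_one hε.le hε1.le (by positivity)
      have hXn : ‖(seq k).2‖ ≤ ‖near k‖ + dist ((seq k).2) (near k) := by
        rw [dist_eq_norm]
        have h := norm_add_le ((seq k).2 - near k) (near k)
        rw [sub_add_cancel] at h
        linarith
      calc ‖(seq k).2‖ ≤ ‖near k‖ + dist ((seq k).2) (near k) := hXn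
        _ ≤ ε ^ (-(M:ℝ)) + 2 * ε ^ (k:ℝ) := add_le_add hb1 hb2
        _ ≤ ε ^ (-(M:ℝ)) + 2 := by linarith
        _ ≤ ε ^ (-((M+1:ℕ):ℝ)) := hstepb
    · rw [hxdef]
      simp only [dif_neg h]
      calc ‖y0 ε‖ ≤ ε ^ (-(M:ℝ)) := hMε _ hy0ε
        _ ≤ ε ^ (-((M+1:ℕ):ℝ)) := by linarith
  -- x and y are equivalent
  have hxy : EqvNet x y := by
    intro m
    refine ((evSmall_le (hpos (m+1))).and evSmall_half).mono fun ε hε hε1 hh => ?_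
    obtain ⟨hεm, hεhalf⟩ := hh
    by_cases h : ∃ k, (seq k).1 = ε
    · obtain ⟨k, hk⟩ := h
      have hxe : x ε = (seq k).2 := by rw [← hk]; exact hxk k
      have hye : y ε = near k := by rw [← hk]; exact hyk k
      show ‖x ε - y ε‖ ≤ ε ^ (m:ℝ)
      rw [hxe, hye, ← dist_eq_norm]
      have hkm : m+1 ≤ k := hord (m+1) k (by rw [hk]; exact hεm)
      have h1 : ε ^ (k:ℝ) ≤ ε ^ ((m+1:ℕ):ℝ) :=
        Real.rpow_le_rpow_of_exponent_ge hε (by linarith) (by exact_mod_cast hkm)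
      have h2 : ε ^ ((m+1:ℕ):ℝ) = ε * ε ^ (m:ℝ) := by
        rw [show ((m+1:ℕ):ℝ) = (m:ℝ) + 1 by push_cast; ring, Real.rpow_add hε,
          Real.rpow_one]
        ring
      have h3 : dist ((seq k).2) (near k) ≤ 2 * ε ^ (k:ℝ) := by
        rw [← hk]; exact hnear2 k
      have h4 : 0 ≤ ε ^ (m:ℝ) := (Real.rpow_pos_of_pos hε _).le
      calc dist ((seq k).2) (near k) ≤ 2 * ε ^ (k:ℝ) := h3
        _ ≤ 2 * (ε * ε ^ (m:ℝ)) := by rw [← h2]; linarith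
        _ = (2 * ε) * ε ^ (m:ℝ) := by ring
        _ ≤ 1 * ε ^ (m:ℝ) := by
            apply mul_le_mul_of_nonneg_right _ h4
            linarith
        _ = ε ^ (m:ℝ) := one_mul _
    · simp only [hxdef, hydef, dif_neg h, sub_self, norm_zero]
      positivity
  -- y is eventually in Aε
  have hymem : EvSmall fun ε => y ε ∈ Aε ε := by
    refine hy0.mono fun ε hε hε1 hyy => ?_
    by_cases h : ∃ k, (seq k).1 = ε
    · obtain ⟨k, hk⟩ := h
      have hye : y ε = near k := by rw [← hk]; exact hyk k
      rw [hye, ← hk]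
      exact hnear1 k
    · rw [hydef]
      simp only [dif_neg h]
      exact hyy
  have hxA : x ∈ InternalSet Aε := ⟨hxmod, y, hxy, hymem⟩
  have hxrep : IsReprOfPointOf (InternalSet Aε) x := ⟨hxmod, x, hxA, eqvNet_refl x⟩
  obtain ⟨w, ⟨N, hwN⟩, hneg⟩ := h2 x hxrep
  obtain ⟨t1, ht10, ht11, hw1⟩ := hwN
  obtain ⟨t2, ht20, ht21, hw2⟩ := hneg 1
  obtain ⟨k₀, hk₀⟩ := exists_pow_lt_of_lt_one
    (show (0:ℝ) < min (min t1 t2) (1/4) by positivity) (show (1/2:ℝ) < 1 by norm_num)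
  set k := max k₀ (N+1) with hkdef
  set ε := (seq k).1 with hεdef
  have hε0 : 0 < ε := hpos k
  have hεsmall : ε ≤ min (min t1 t2) (1/4) := by
    calc ε ≤ (1/2)^(k+1) := (hmain k).2.1
      _ ≤ (1/2)^k₀ := pow_le_pow_of_le_one (by norm_num) (by norm_num)
          (le_trans (le_max_left _ _) (Nat.le_succ k))
      _ ≤ min (min t1 t2) (1/4) := hk₀.le
  have hεt1 : ε ≤ t1 := le_trans hεsmall (le_trans (min_le_left _ _) (min_le_left _ _))
  have hεt2 : ε ≤ t2 := le_trans hεsmall (le_trans (min_le_left _ _) (min_le_right _ _))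
  have hε4 : ε ≤ 1/4 := le_trans hεsmall (min_le_right _ _)
  have hbad : ‖u ε ((seq k).2)‖ < ε ^ (k:ℝ) := (hmain k).2.2.2
  have hw1' : ‖w ε‖ ≤ ε ^ (-(N:ℝ)) := hw1 ε hε0 hεt1
  have hw2' : ‖u ε (x ε) * w ε - 1‖ ≤ ε ^ ((1:ℕ):ℝ) := hw2 ε hε0 hεt2
  have hxe : x ε = (seq k).2 := by rw [hεdef]; exact hxk k
  rw [hxe] at hw2'
  have hεpow1 : ε ^ ((1:ℕ):ℝ) = ε := by
    rw [show ((1:ℕ):ℝ) = (1:ℝ) by norm_num, Real.rpow_one]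
  have hprod : ε ^ (k:ℝ) * ε ^ (-(N:ℝ)) ≤ ε := by
    rw [← Real.rpow_add hε0]
    calc ε ^ ((k:ℝ) + -(N:ℝ)) ≤ ε ^ (1:ℝ) := by
          apply Real.rpow_le_rpow_of_exponent_ge hε0 (by linarith)
          have : (N:ℝ) + 1 ≤ (k:ℝ) := by
            have := le_max_right k₀ (N+1)
            exact_mod_cast Nat.cast_le.mpr this
          linarith
      _ = ε := Real.rpow_one ε
  have htri : (1:ℝ) ≤ ‖u ε ((seq k).2) * w ε - 1‖ + ‖u ε ((seq k).2) * w ε‖ := by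
    have h := norm_sub_le (u ε ((seq k).2) * w ε) (u ε ((seq k).2) * w ε - 1)
    simp only [sub_sub_cancel] at h
    rw [norm_one] at h
    linarith [norm_sub_rev (u ε ((seq k).2) * w ε) (u ε ((seq k).2) * w ε - 1)]
  have hmul : ‖u ε ((seq k).2) * w ε‖ ≤ ε := by
    rw [norm_mul]
    calc ‖u ε ((seq k).2)‖ * ‖w ε‖ ≤ ε ^ (k:ℝ) * ε ^ (-(N:ℝ)) :=
          mul_le_mul hbad.le hw1' (norm_nonneg _) (by positivity)
      _ ≤ ε := hprod
  rw [hεpow1] at hw2'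
  linarith

lemma lemma_three_imp_one {V : Type*} [NormedAddCommGroup V] [NormedSpace ℝ V]
    (Aε : ℝ → Set V) (u : ℝ → V → ℂ) (hu : EMod (InternalSet Aε) u)
    (h3 : ∃ ε₀ : ℝ, 0 < ε₀ ∧ ε₀ < 1 ∧ ∃ n : ℕ, ∀ ε : ℝ, 0 < ε → ε ≤ ε₀ →
      ∀ x ∈ Metric.cthickening (ε ^ (n : ℝ)) (Aε ε), ε ^ (n : ℝ) ≤ ‖u ε x‖) :
    ∃ v : ℝ → V → ℂ, EMod (InternalSet Aε) v ∧
      GEq (InternalSet Aε) (fun ε z => u ε z * v ε z) (fun _ _ => 1) := by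
  obtain ⟨ε₀, hε₀, hε₀1, n, hn⟩ := h3
  set v : ℝ → V → ℂ := fun ε z => chiAux (ε ^ (n:ℝ)) (u ε z) with hvdef
  have husm := hu.1
  have hvsm : SmoothNet v := by
    intro ε h0 h1
    exact (chiAux_contDiff (Real.rpow_pos_of_pos h0 _)).comp (husm ε h0 h1)
  -- the key localization event: `|u_ε| ≥ ε^n` on a ball around any representative point
  have key : ∀ x : ℝ → V, IsReprOfPointOf (InternalSet Aε) x →
      EvSmall fun ε => ∀ z ∈ Metric.ball (x ε) (ε^(n:ℝ)/2), ε^(n:ℝ) ≤ ‖u ε z‖ := by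
    intro x hx
    obtain ⟨y, hyA, hxy⟩ := repr_near hx
    refine ((hyA.and (hxy (n+1))).and ((evSmall_le hε₀).and evSmall_half)).mono
      fun ε hε hε1 hh => ?_
    obtain ⟨⟨hy, hnear⟩, hεε₀, hεhalf⟩ := hh
    intro z hz
    have hr : dist z (y ε) ≤ ε ^ (n:ℝ) := by
      have h1 : dist z (x ε) ≤ ε^(n:ℝ)/2 := (Metric.mem_ball.mp hz).le
      have h2 : dist (x ε) (y ε) ≤ ε^((n+1:ℕ):ℝ) := by rw [dist_eq_norm]; exact hnear
      have h3 : ε^((n+1:ℕ):ℝ) = ε * ε^(n:ℝ) := by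
        rw [show ((n+1:ℕ):ℝ) = (n:ℝ)+1 by push_cast; ring, Real.rpow_add hε, Real.rpow_one]
        ring
      have h4 : 0 < ε^(n:ℝ) := Real.rpow_pos_of_pos hε _
      calc dist z (y ε) ≤ dist z (x ε) + dist (x ε) (y ε) := dist_triangle _ _ _
        _ ≤ ε^(n:ℝ)/2 + ε * ε^(n:ℝ) := by rw [h3] at h2; linarith
        _ ≤ ε^(n:ℝ) := by nlinarith
    exact hn ε hε hεε₀ z (Metric.mem_cthickening_of_dist_le z (y ε) _ _ hy hr)
  -- moderateness of all derivatives of v at representative points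
  have hmod : ∀ (nn : ℕ) (x : ℝ → V), IsReprOfPointOf (InternalSet Aε) x →
      Moderate fun ε => iteratedFDeriv ℝ nn (v ε) (x ε) := by
    intro nn x hx
    have hkey := key x hx
    have hU : ∀ j : ℕ, MB fun ε => ‖iteratedFDeriv ℝ j (u ε) (x ε)‖ :=
      fun j => (moderate_iff_MB _).mp (hu.2 j x hx)
    have hW : ∀ j : ℕ, MB fun ε => ‖iteratedFDeriv ℝ j (v ε) (x ε)‖ := by
      intro j
      induction j using Nat.strong_induction_on with
      | _ j IH =>
        match j with
        | 0 =>
          refine ⟨n, hkey.mono fun ε hε hε1 hev => ?_⟩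
          have hpow : (0:ℝ) < ε^(n:ℝ) := Real.rpow_pos_of_pos hε _
          have hub := hev (x ε) (Metric.mem_ball_self (by positivity))
          show ‖iteratedFDeriv ℝ 0 (v ε) (x ε)‖ ≤ ε ^ (-(n:ℝ))
          rw [norm_iteratedFDeriv_zero]
          have hveq : v ε (x ε) = (u ε (x ε))⁻¹ := chiAux_eq_inv hpow hub
          rw [hveq, norm_inv, Real.rpow_neg hε.le]
          exact inv_anti₀ hpow hub
        | (j+1) =>
          have hMBS : MB fun ε => ∑ i ∈ Finset.range (j+1), (j.choose i : ℝ) *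
              (∑ l ∈ Finset.range (i+1), (i.choose l : ℝ) *
                ‖iteratedFDeriv ℝ l (v ε) (x ε)‖ * ‖iteratedFDeriv ℝ (i-l) (v ε) (x ε)‖) *
              ‖iteratedFDeriv ℝ (j-i+1) (u ε) (x ε)‖ := by
            refine MB.finset_sum _ _ fun i hi => ?_
            have hi' : i ≤ j := Nat.lt_succ_iff.mp (Finset.mem_range.mp hi)
            have hinner : MB fun ε => ∑ l ∈ Finset.range (i+1), (i.choose l : ℝ) *
                ‖iteratedFDeriv ℝ l (v ε) (x ε)‖ * ‖iteratedFDeriv ℝ (i-l) (v ε) (x ε)‖ := by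
              refine MB.finset_sum _ _ fun l hl => ?_
              have hl' : l ≤ i := Nat.lt_succ_iff.mp (Finset.mem_range.mp hl)
              refine MB.mul (MB.mul (MB_const _) (IH l (by omega))
                (fun ε => by positivity) (fun ε => norm_nonneg _))
                (IH (i-l) (by omega)) (fun ε => by positivity) (fun ε => norm_nonneg _)
            refine MB.mul (MB.mul (MB_const _) hinner
              (fun ε => by positivity) ?_) (hU (j-i+1)) ?_ (fun ε => norm_nonneg _)
            · intro ε
              exact Finset.sum_nonneg fun l _ => by positivity
            · intro ε
              apply mul_nonneg (by positivity)
              exact Finset.sum_nonneg fun l _ => by positivity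
          refine hMBS.of_le (hkey.mono fun ε hε hε1 hev => ?_)
          have hpow : (0:ℝ) < ε^(n:ℝ) := Real.rpow_pos_of_pos hε _
          have hB : IsOpen (Metric.ball (x ε) (ε^(n:ℝ)/2)) := Metric.isOpen_ball
          have hxB : x ε ∈ Metric.ball (x ε) (ε^(n:ℝ)/2) :=
            Metric.mem_ball_self (by positivity)
          have huC : ContDiff ℝ (⊤:ℕ∞) (u ε) := husm ε hε hε1
          have hvC : ContDiff ℝ (⊤:ℕ∞) (v ε) := hvsm ε hε hε1
          have hne0 : ∀ z ∈ Metric.ball (x ε) (ε^(n:ℝ)/2), u ε z ≠ 0 := by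
            intro z hz
            have := hev z hz
            intro h0
            rw [h0, norm_zero] at this
            linarith
          have hEqB : Set.EqOn (v ε) (fun z => (u ε z)⁻¹)
              (Metric.ball (x ε) (ε^(n:ℝ)/2)) :=
            fun z hz => chiAux_eq_inv hpow (hev z hz)
          have hfderiv : Set.EqOn (fderiv ℝ (v ε))
              (fun z => (-(v ε z * v ε z)) • fderiv ℝ (u ε) z)
              (Metric.ball (x ε) (ε^(n:ℝ)/2)) := by
            intro z hz
            show fderiv ℝ (v ε) z = (-(v ε z * v ε z)) • fderiv ℝ (u ε) z
            have hc := hne0 z hz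
            have hdu : HasFDerivAt (u ε) (fderiv ℝ (u ε) z) z :=
              ((huC.differentiable (by simp)) z).hasFDerivAt
            have hinv : HasFDerivAt (fun y => (u ε y)⁻¹)
                ((-((u ε z)⁻¹ * (u ε z)⁻¹)) • fderiv ℝ (u ε) z) z := by
              have h1 : HasFDerivAt Inv.inv
                  (-(ContinuousLinearMap.mulLeftRight ℝ ℂ (u ε z)⁻¹ (u ε z)⁻¹)) (u ε z) :=
                hasFDerivAt_inv' hc
              have h2 := h1.comp z hdu
              refine h2.congr_fderiv ?_
              ext w
              simp [ContinuousLinearMap.mulLeftRight_apply]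
              ring
            have hv' : HasFDerivAt (v ε)
                ((-((u ε z)⁻¹ * (u ε z)⁻¹)) • fderiv ℝ (u ε) z) z :=
              hinv.congr_of_eventuallyEq (Filter.eventuallyEq_of_mem (hB.mem_nhds hz) hEqB)
            rw [hv'.fderiv]
            rw [hEqB hz]
          show ‖iteratedFDeriv ℝ (j+1) (v ε) (x ε)‖ ≤ ∑ i ∈ Finset.range (j+1),
            (j.choose i : ℝ) * (∑ l ∈ Finset.range (i+1), (i.choose l : ℝ) *
              ‖iteratedFDeriv ℝ l (v ε) (x ε)‖ * ‖iteratedFDeriv ℝ (i-l) (v ε) (x ε)‖) *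
            ‖iteratedFDeriv ℝ (j-i+1) (u ε) (x ε)‖
          calc ‖iteratedFDeriv ℝ (j+1) (v ε) (x ε)‖
              = ‖iteratedFDeriv ℝ j (fderiv ℝ (v ε)) (x ε)‖ :=
                (norm_iteratedFDeriv_fderiv).symm
            _ = ‖iteratedFDeriv ℝ j
                  (fun z => (-(v ε z * v ε z)) • fderiv ℝ (u ε) z) (x ε)‖ := by
                rw [iteratedFDeriv_congr_isOpen hB hxB hfderiv j]
            _ ≤ ∑ i ∈ Finset.range (j+1), (j.choose i : ℝ) *
                  ‖iteratedFDeriv ℝ i (fun z => -(v ε z * v ε z)) (x ε)‖ *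
                  ‖iteratedFDeriv ℝ (j-i) (fderiv ℝ (u ε)) (x ε)‖ :=
                norm_iteratedFDeriv_smul_le ((hvC.mul hvC).neg)
                  (huC.fderiv_right (by simp)) (x ε) (by exact_mod_cast le_top)
            _ ≤ ∑ i ∈ Finset.range (j+1), (j.choose i : ℝ) *
                  (∑ l ∈ Finset.range (i+1), (i.choose l : ℝ) *
                    ‖iteratedFDeriv ℝ l (v ε) (x ε)‖ *
                    ‖iteratedFDeriv ℝ (i-l) (v ε) (x ε)‖) *
                  ‖iteratedFDeriv ℝ (j-i+1) (u ε) (x ε)‖ := by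
                refine Finset.sum_le_sum fun i _ => ?_
                have hnegeq : ‖iteratedFDeriv ℝ i (fun z => -(v ε z * v ε z)) (x ε)‖ =
                    ‖iteratedFDeriv ℝ i (fun z => v ε z * v ε z) (x ε)‖ := by
                  have h2 : iteratedFDeriv ℝ i (fun z => -(v ε z * v ε z)) (x ε) =
                      -(iteratedFDeriv ℝ i (fun z => v ε z * v ε z) (x ε)) :=
                    iteratedFDeriv_neg_apply
                  rw [h2, norm_neg]
                have hmulle : ‖iteratedFDeriv ℝ i (fun z => v ε z * v ε z) (x ε)‖ ≤
                    ∑ l ∈ Finset.range (i+1), (i.choose l : ℝ) *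
                      ‖iteratedFDeriv ℝ l (v ε) (x ε)‖ *
                      ‖iteratedFDeriv ℝ (i-l) (v ε) (x ε)‖ :=
                  norm_iteratedFDeriv_mul_le hvC hvC (x ε) (by exact_mod_cast le_top)
                have hfd : ‖iteratedFDeriv ℝ (j-i) (fderiv ℝ (u ε)) (x ε)‖ =
                    ‖iteratedFDeriv ℝ (j-i+1) (u ε) (x ε)‖ := norm_iteratedFDeriv_fderiv
                rw [hfd]
                apply mul_le_mul_of_nonneg_right _ (norm_nonneg _)
                apply mul_le_mul_of_nonneg_left _ (by positivity)
                rw [hnegeq]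
                exact hmulle
    exact hW nn
  -- the product is 1 in the generalized sense
  have hnneg : NNeg (InternalSet Aε) fun ε z => u ε z * v ε z - 1 := by
    constructor
    · intro ε h0 h1
      exact ((husm ε h0 h1).mul (hvsm ε h0 h1)).sub contDiff_const
    · intro j x hx
      have hkey := key x hx
      intro m
      refine hkey.mono fun ε hε hε1 hev => ?_
      have hpow : (0:ℝ) < ε^(n:ℝ) := Real.rpow_pos_of_pos hε _
      have hB : IsOpen (Metric.ball (x ε) (ε^(n:ℝ)/2)) := Metric.isOpen_ball
      have hxB : x ε ∈ Metric.ball (x ε) (ε^(n:ℝ)/2) := Metric.mem_ball_self (by positivity)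
      have hEqB : Set.EqOn (fun z => u ε z * v ε z - 1) (fun _ => (0:ℂ))
          (Metric.ball (x ε) (ε^(n:ℝ)/2)) := by
        intro z hz
        have h1 := hev z hz
        have hne : u ε z ≠ 0 := by
          intro h0
          rw [h0, norm_zero] at h1
          linarith
        show u ε z * v ε z - 1 = 0
        have hveq : v ε z = (u ε z)⁻¹ := chiAux_eq_inv hpow h1
        rw [hveq, mul_inv_cancel₀ hne, sub_self]
      have hzero : iteratedFDeriv ℝ j (fun z => u ε z * v ε z - 1) (x ε) = 0 := by
        rw [iteratedFDeriv_congr_isOpen hB hxB hEqB j, iteratedFDeriv_zero_fun]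
        simp
      show ‖iteratedFDeriv ℝ j (fun z => u ε z * v ε z - 1) (x ε)‖ ≤ ε ^ (m:ℝ)
      rw [hzero, norm_zero]
      positivity
  exact ⟨v, ⟨hvsm, hmod⟩, hnneg⟩

end Aux

/-- Proposition 3.18: pointwise invertibility criterion on an internal sharply bounded set. -/
theorem invertibility_internal_sharplyBounded (d : ℕ)
    (A : Set (ℝ → EuclideanSpace ℝ (Fin d)))
    (Aε : ℝ → Set (EuclideanSpace ℝ (Fin d)))
    (hA : A = InternalSet Aε) (hne : A.Nonempty)
    (hbdA : SharplyBddSet A) (hbd : SharplyBddRep Aε)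
    (u : ℝ → EuclideanSpace ℝ (Fin d) → ℂ) (hu : EMod A u) :
    -- (1) ↔ (2)
    ((∃ v : ℝ → EuclideanSpace ℝ (Fin d) → ℂ, EMod A v ∧
        GEq A (fun ε z => u ε z * v ε z) (fun _ _ => 1)) ↔
      (∀ x : ℝ → EuclideanSpace ℝ (Fin d), IsReprOfPointOf A x →
        ∃ w : ℝ → ℂ, Moderate w ∧ Negligible fun ε => u ε (x ε) * w ε - 1)) ∧
    -- (1) ↔ (3)
    ((∃ v : ℝ → EuclideanSpace ℝ (Fin d) → ℂ, EMod A v ∧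
        GEq A (fun ε z => u ε z * v ε z) (fun _ _ => 1)) ↔
      (∃ ε₀ : ℝ, 0 < ε₀ ∧ ε₀ < 1 ∧ ∃ n : ℕ, ∀ ε : ℝ, 0 < ε → ε ≤ ε₀ →
        ∀ x ∈ Metric.cthickening (ε ^ (n : ℝ)) (Aε ε), ε ^ (n : ℝ) ≤ ‖u ε x‖)) := by
  subst hA
  refine ⟨⟨lemma_one_imp_two _ u, fun h2 => ?_⟩,
    ⟨fun h1 => lemma_two_imp_three Aε hne hbd u (lemma_one_imp_two _ u h1),
      lemma_three_imp_one Aε u hu⟩⟩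
  exact lemma_three_imp_one Aε u hu (lemma_two_imp_three Aε hne hbd u h2)

end
end

section
/- Let a_n ∈ C̃ for each n ∈ ℕ and set R = 1/limsup_{n→∞} ‖a_n‖^{1/n} ∈ [0,+∞]. Then the series Σ_{n=0}^∞ a_n z̃^n converges in the sharp topology for every z̃ ∈ C̃ with ‖z̃‖ < R, and does not converge for any invertible z̃ ∈ C̃ with ‖z̃^{-1}‖ < 1/R. Moreover, the convergence is uniform on every ball {z̃ ∈ C̃ : ‖z̃‖ ≤ r} with r < R. -/
open Real Set Metric MeasureTheory Filter

noncomputable section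

/-- The radius of convergence `R = 1 / limsup ‖a_n‖^{1/n} ∈ [0,∞]` of a power series with
coefficients in `C̃`. -/
noncomputable def convRadius (a : ℕ → ℝ → ℂ) : ENNReal :=
  (Filter.limsup (fun n => ENNReal.ofReal (sharpNorm (a n) ^ (1 / (n : ℝ)))) Filter.atTop)⁻¹

section AuxSection
open Topology

namespace Aux

lemma evSmall_iff (P : ℝ → Prop) : EvSmall P ↔ ∀ᶠ ε in 𝓝[>] (0:ℝ), P ε := by
  constructor
  · rintro ⟨ε₀, h0, h1, h⟩
    have : Set.Ioc (0:ℝ) ε₀ ∈ 𝓝[>] (0:ℝ) := Ioc_mem_nhdsGT_of_mem ⟨le_refl 0, h0⟩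
    filter_upwards [this] with ε hε using h ε hε.1 hε.2
  · intro h
    obtain ⟨u, hu, hsub⟩ := mem_nhdsGT_iff_exists_Ioc_subset.mp h
    refine ⟨min u (1/2), lt_min hu (by norm_num), by
      exact lt_of_le_of_lt (min_le_right _ _) (by norm_num), fun ε hε hε' => ?_⟩
    exact hsub ⟨hε, le_trans hε' (min_le_left _ _)⟩

/-- eventually ε ∈ (0,1] -/
lemma ev_mem : ∀ᶠ ε in 𝓝[>] (0:ℝ), 0 < ε ∧ ε ≤ 1 := by
  have : Set.Ioc (0:ℝ) 1 ∈ 𝓝[>] (0:ℝ) := Ioc_mem_nhdsGT_of_mem ⟨le_refl 0, one_pos⟩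
  filter_upwards [this] with ε hε using ⟨hε.1, hε.2⟩

lemma ev_le {d : ℝ} (hd : 0 < d) : ∀ᶠ ε in 𝓝[>] (0:ℝ), ε ≤ d := by
  have : Set.Ioc (0:ℝ) d ∈ 𝓝[>] (0:ℝ) := Ioc_mem_nhdsGT_of_mem ⟨le_refl 0, hd⟩
  filter_upwards [this] with ε hε using hε.2

lemma tendsto_rpow_zero {p : ℝ} (hp : 0 < p) :
    Filter.Tendsto (fun ε : ℝ => ε ^ p) (𝓝[>] (0:ℝ)) (𝓝 0) := by
  have h := (Real.continuousAt_rpow_const 0 p (Or.inr hp.le)).tendsto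
  rw [Real.zero_rpow hp.ne'] at h
  exact h.mono_left nhdsWithin_le_nhds

lemma ev_rpow_le {p c : ℝ} (hp : 0 < p) (hc : 0 < c) :
    ∀ᶠ ε in 𝓝[>] (0:ℝ), ε ^ p ≤ c := by
  exact (tendsto_rpow_zero hp).eventually (eventually_le_nhds hc)

lemma ev_absorb (C : ℝ) {b b' : ℝ} (h : b' < b) :
    ∀ᶠ ε in 𝓝[>] (0:ℝ), C * ε ^ b ≤ ε ^ b' := by
  have hp : 0 < b - b' := by linarith
  have h1 : ∀ᶠ ε in 𝓝[>] (0:ℝ), C * ε ^ (b - b') ≤ 1 := by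
    have := (tendsto_rpow_zero hp).const_mul C
    rw [mul_zero] at this
    exact this.eventually (eventually_le_nhds one_pos)
  filter_upwards [h1, self_mem_nhdsWithin] with ε h1 hε
  have hε : (0:ℝ) < ε := hε
  have : ε ^ b = ε ^ (b - b') * ε ^ b' := by
    rw [← Real.rpow_add hε]; ring_nf
  rw [this, ← mul_assoc]
  calc C * ε ^ (b - b') * ε ^ b' ≤ 1 * ε ^ b' := by
        exact mul_le_mul_of_nonneg_right h1 (Real.rpow_nonneg hε.le _)
    _ = ε ^ b' := one_mul _

end Aux

namespace Aux

/-- `b` is an admissible valuation bound for `x`. -/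
def Sx {E : Type*} [SeminormedAddGroup E] (x : ℝ → E) (b : ℝ) : Prop :=
  ∀ᶠ ε in 𝓝[>] (0:ℝ), ‖x ε‖ ≤ ε ^ b

variable {E : Type*} [SeminormedAddGroup E]

lemma sNSet_def (x : ℝ → E) :
    {r : ℝ | ∃ b : ℝ, r = Real.exp (-b) ∧ EvSmall fun ε => ‖x ε‖ ≤ ε ^ b}
      = {r : ℝ | ∃ b : ℝ, r = Real.exp (-b) ∧ Sx x b} := by
  simp only [evSmall_iff]; rfl

lemma sNSet_bdd (x : ℝ → E) :
    BddBelow {r : ℝ | ∃ b : ℝ, r = Real.exp (-b) ∧ Sx x b} :=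
  ⟨0, fun r hr => by obtain ⟨b, rfl, -⟩ := hr; exact (Real.exp_pos _).le⟩

lemma sharpNorm_eq (x : ℝ → E) :
    sharpNorm x = sInf {r : ℝ | ∃ b : ℝ, r = Real.exp (-b) ∧ Sx x b} := by
  rw [sharpNorm, sNSet_def]

lemma sharpNorm_nonneg (x : ℝ → E) : 0 ≤ sharpNorm x := by
  rw [sharpNorm_eq]
  exact Real.sInf_nonneg (fun r hr => by obtain ⟨b, rfl, -⟩ := hr; exact (Real.exp_pos _).le)

lemma sharpNorm_le_of_Sx {x : ℝ → E} {b : ℝ} (h : Sx x b) : sharpNorm x ≤ Real.exp (-b) := by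
  rw [sharpNorm_eq]
  exact csInf_le (sNSet_bdd x) ⟨b, rfl, h⟩

lemma Sx.mono {x : ℝ → E} {b b' : ℝ} (h : Sx x b) (hb : b' ≤ b) : Sx x b' := by
  filter_upwards [h, ev_mem] with ε hε h1
  exact le_trans hε (Real.rpow_le_rpow_of_exponent_ge h1.1 h1.2 hb)

lemma moderate_of_Sx {x : ℝ → E} {b : ℝ} (hb : Sx x b) : Moderate x := by
  refine ⟨⌈-b⌉₊, (evSmall_iff _).mpr ?_⟩
  have hble : -(⌈-b⌉₊:ℝ) ≤ b := by
    have := Nat.le_ceil (-b); linarith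
  exact hb.mono hble

lemma moderate_iff_Sx {x : ℝ → E} : Moderate x ↔ ∃ b, Sx x b := by
  constructor
  · rintro ⟨N, hN⟩; exact ⟨-(N:ℝ), (evSmall_iff _).mp hN⟩
  · rintro ⟨b, hb⟩; exact moderate_of_Sx hb

lemma exists_Sx_of_lt {x : ℝ → E} {c : ℝ} (hx : Moderate x) (h : sharpNorm x < c) :
    ∃ b : ℝ, Real.exp (-b) < c ∧ Sx x b := by
  obtain ⟨b0, hb0⟩ := moderate_iff_Sx.mp hx
  rw [sharpNorm_eq] at h
  have hne : {r : ℝ | ∃ b : ℝ, r = Real.exp (-b) ∧ Sx x b}.Nonempty := ⟨_, b0, rfl, hb0⟩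
  obtain ⟨r, ⟨b, rfl, hb⟩, hrc⟩ := (csInf_lt_iff (sNSet_bdd x) hne).mp h
  exact ⟨b, hrc, hb⟩

lemma Sx_of_le {x : ℝ → E} {b b' : ℝ} (hx : Moderate x) (h : sharpNorm x ≤ Real.exp (-b))
    (hb' : b' < b) : Sx x b' := by
  have h2 : sharpNorm x < Real.exp (-b') := lt_of_le_of_lt h (Real.exp_lt_exp.mpr (by linarith))
  obtain ⟨c, hc, hcx⟩ := exists_Sx_of_lt hx h2
  have : b' ≤ c := by
    by_contra hcon
    push_neg at hcon
    have := Real.exp_lt_exp.mpr (show -b' < -c by linarith)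
    linarith
  exact hcx.mono this

end Aux

namespace Aux

variable {E : Type*} [SeminormedAddGroup E]

lemma negligible_iff_Sx {x : ℝ → E} : Negligible x ↔ ∀ b : ℝ, Sx x b := by
  constructor
  · intro h b
    have := (evSmall_iff _).mp (h ⌈b⌉₊)
    exact Sx.mono this (Nat.le_ceil b)
  · intro h m
    exact (evSmall_iff _).mpr (h m)

lemma negligible_sharpNorm {x : ℝ → E} (h : Negligible x) : sharpNorm x = 0 := by
  refine le_antisymm ?_ (sharpNorm_nonneg x)
  have : ∀ b : ℝ, sharpNorm x ≤ Real.exp (-b) :=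
    fun b => sharpNorm_le_of_Sx ((negligible_iff_Sx.mp h) b)
  by_contra hc
  push_neg at hc
  have h2 := this (-Real.log (sharpNorm x / 2))
  rw [neg_neg, Real.exp_log (by linarith)] at h2
  linarith

lemma negligible_of_sharpNorm {x : ℝ → E} (hx : Moderate x) (h : sharpNorm x = 0) :
    Negligible x := by
  rw [negligible_iff_Sx]
  intro b
  refine Sx_of_le hx ?_ (show b < b + 1 by linarith)
  rw [h]; exact (Real.exp_pos _).le

lemma negligible_moderate {x : ℝ → E} (h : Negligible x) : Moderate x :=
  moderate_of_Sx (negligible_iff_Sx.mp h 0)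

lemma moderate_add {x y : ℝ → E} (hx : Moderate x) (hy : Moderate y) :
    Moderate (fun ε => x ε + y ε) := by
  obtain ⟨b1, h1⟩ := moderate_iff_Sx.mp hx
  obtain ⟨b2, h2⟩ := moderate_iff_Sx.mp hy
  refine moderate_of_Sx (b := min b1 b2 - 1) ?_
  filter_upwards [h1.mono (min_le_left b1 b2), h2.mono (min_le_right b1 b2),
    ev_absorb 2 (show min b1 b2 - 1 < min b1 b2 by linarith)] with ε e1 e2 e3
  calc ‖x ε + y ε‖ ≤ ‖x ε‖ + ‖y ε‖ := norm_add_le _ _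
    _ ≤ ε ^ min b1 b2 + ε ^ min b1 b2 := add_le_add e1 e2
    _ = 2 * ε ^ min b1 b2 := by ring
    _ ≤ ε ^ (min b1 b2 - 1) := e3

lemma sharpNorm_neg (x : ℝ → E) : sharpNorm (fun ε => -(x ε)) = sharpNorm x := by
  unfold sharpNorm
  simp only [norm_neg]

lemma moderate_neg {x : ℝ → E} (hx : Moderate x) : Moderate (fun ε => -(x ε)) := by
  obtain ⟨N, hN⟩ := hx
  exact ⟨N, by simpa only [norm_neg] using hN⟩

lemma sharpNorm_add_le {x y : ℝ → E} (hx : Moderate x) (hy : Moderate y) :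
    sharpNorm (fun ε => x ε + y ε) ≤ max (sharpNorm x) (sharpNorm y) := by
  refine le_of_forall_gt_imp_ge_of_dense fun c hc => ?_
  have hc0 : 0 < c := lt_of_le_of_lt (le_max_of_le_left (sharpNorm_nonneg x)) hc
  obtain ⟨b1, hb1, hxb⟩ := exists_Sx_of_lt hx (lt_of_le_of_lt (le_max_left _ _) hc)
  obtain ⟨b2, hb2, hyb⟩ := exists_Sx_of_lt hy (lt_of_le_of_lt (le_max_right _ _) hc)
  set b := min b1 b2 with hbdef
  have hbc : Real.exp (-b) < c := by
    rcases min_cases b1 b2 with ⟨h, -⟩ | ⟨h, -⟩ <;> rw [hbdef, h] <;> assumption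
  have hlog : -Real.log c < b := by
    have := (Real.lt_log_iff_exp_lt hc0).mpr hbc
    linarith
  set b' := (-Real.log c + b) / 2 with hb'def
  have hb'1 : b' < b := by rw [hb'def]; linarith
  have hb'2 : -Real.log c < b' := by rw [hb'def]; linarith
  have hexp : Real.exp (-b') < c := by
    have : -b' < Real.log c := by linarith
    calc Real.exp (-b') < Real.exp (Real.log c) := Real.exp_lt_exp.mpr this
      _ = c := Real.exp_log hc0
  refine le_trans (sharpNorm_le_of_Sx (x := fun ε => x ε + y ε) (b := b') ?_) hexp.le
  filter_upwards [hxb.mono (min_le_left b1 b2), hyb.mono (min_le_right b1 b2),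
    ev_absorb 2 hb'1] with ε e1 e2 e3
  calc ‖x ε + y ε‖ ≤ ‖x ε‖ + ‖y ε‖ := norm_add_le _ _
    _ ≤ ε ^ b + ε ^ b := add_le_add e1 e2
    _ = 2 * ε ^ b := by ring
    _ ≤ ε ^ b' := e3

end Aux

namespace Aux

variable {E : Type*} [SeminormedAddGroup E]

lemma sharpNorm_sub_le {x y : ℝ → E} (hx : Moderate x) (hy : Moderate y) :
    sharpNorm (fun ε => x ε - y ε) ≤ max (sharpNorm x) (sharpNorm y) := by
  have := sharpNorm_add_le hx (moderate_neg hy)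
  rw [sharpNorm_neg] at this
  simpa [sub_eq_add_neg] using this

lemma moderate_sub {x y : ℝ → E} (hx : Moderate x) (hy : Moderate y) :
    Moderate (fun ε => x ε - y ε) := by
  simpa [sub_eq_add_neg] using moderate_add hx (moderate_neg hy)

lemma negligible_zero : Negligible (fun _ : ℝ => (0 : E)) := by
  intro m
  refine (evSmall_iff _).mpr ?_
  filter_upwards [self_mem_nhdsWithin] with ε hε
  simpa using (Real.rpow_nonneg (le_of_lt (Set.mem_Ioi.mp hε)) ((m:ℝ)))

lemma sharpNorm_add_negligible {x u : ℝ → E} (hx : Moderate x) (hu : Negligible u) :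
    sharpNorm (fun ε => x ε + u ε) = sharpNorm x := by
  have hum := negligible_moderate hu
  have h1 : sharpNorm (fun ε => x ε + u ε) ≤ sharpNorm x := by
    have := sharpNorm_add_le hx hum
    rwa [negligible_sharpNorm hu, max_eq_left (sharpNorm_nonneg x)] at this
  have h2 : sharpNorm x ≤ sharpNorm (fun ε => x ε + u ε) := by
    have := sharpNorm_add_le (moderate_add hx hum) (moderate_neg hum)
    rw [sharpNorm_neg, negligible_sharpNorm hu,
      max_eq_left (sharpNorm_nonneg _)] at this
    simpa using this
  exact le_antisymm h1 h2

variable {F : Type*} [SeminormedAddCommGroup F]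

lemma moderate_finsetSum {ι : Type*} (s : Finset ι) (u : ι → ℝ → F)
    (h : ∀ i ∈ s, Moderate (u i)) : Moderate (fun ε => ∑ i ∈ s, u i ε) := by
  classical
  induction s using Finset.induction_on with
  | empty => exact moderate_of_Sx (b := 0) (by
      filter_upwards [self_mem_nhdsWithin] with ε hε
      simpa using Real.rpow_nonneg (le_of_lt (Set.mem_Ioi.mp hε)) _)
  | @insert i t hni ih =>
    simp only [Finset.sum_insert hni]
    exact moderate_add (h i (Finset.mem_insert_self i t))
      (ih fun j hj => h j (Finset.mem_insert_of_mem hj))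

lemma sharpNorm_finsetSum_le {ι : Type*} (s : Finset ι) (u : ι → ℝ → F) {C : ℝ}
    (hC : 0 ≤ C) (hm : ∀ i ∈ s, Moderate (u i)) (h : ∀ i ∈ s, sharpNorm (u i) ≤ C) :
    sharpNorm (fun ε => ∑ i ∈ s, u i ε) ≤ C := by
  classical
  induction s using Finset.induction_on with
  | empty =>
    simp only [Finset.sum_empty]
    rw [negligible_sharpNorm negligible_zero]; exact hC
  | @insert i t hni ih =>
    simp only [Finset.sum_insert hni]
    refine le_trans (sharpNorm_add_le (hm i (Finset.mem_insert_self i t))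
      (moderate_finsetSum t u fun j hj => hm j (Finset.mem_insert_of_mem hj))) ?_
    exact max_le (h i (Finset.mem_insert_self i t))
      (ih (fun j hj => hm j (Finset.mem_insert_of_mem hj))
          (fun j hj => h j (Finset.mem_insert_of_mem hj)))

end Aux

namespace Aux

lemma Sx_mul {x y : ℝ → ℂ} {b1 b2 : ℝ} (h1 : Sx x b1) (h2 : Sx y b2) :
    Sx (fun ε => x ε * y ε) (b1 + b2) := by
  filter_upwards [h1, h2, self_mem_nhdsWithin] with ε e1 e2 hε
  have hε : (0:ℝ) < ε := hε
  rw [Real.rpow_add hε]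
  calc ‖x ε * y ε‖ = ‖x ε‖ * ‖y ε‖ := norm_mul _ _
    _ ≤ ε ^ b1 * ε ^ b2 := mul_le_mul e1 e2 (norm_nonneg _) (Real.rpow_nonneg hε.le _)

lemma moderate_mul {x y : ℝ → ℂ} (hx : Moderate x) (hy : Moderate y) :
    Moderate (fun ε => x ε * y ε) := by
  obtain ⟨b1, h1⟩ := moderate_iff_Sx.mp hx
  obtain ⟨b2, h2⟩ := moderate_iff_Sx.mp hy
  exact moderate_of_Sx (Sx_mul h1 h2)

lemma moderate_one : Moderate (fun _ : ℝ => (1 : ℂ)) := by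
  refine moderate_of_Sx (b := 0) ?_
  filter_upwards [self_mem_nhdsWithin] with ε hε
  simp [Real.rpow_zero]

lemma moderate_pow {z : ℝ → ℂ} (hz : Moderate z) (n : ℕ) :
    Moderate (fun ε => z ε ^ n) := by
  induction n with
  | zero => simpa using moderate_one
  | succ k ih =>
    have := moderate_mul ih hz
    simpa [pow_succ] using this

lemma sharpNorm_mul_le {x y : ℝ → ℂ} (hx : Moderate x) (hy : Moderate y) :
    sharpNorm (fun ε => x ε * y ε) ≤ sharpNorm x * sharpNorm y := by
  have key : ∀ c1 > sharpNorm x, ∀ c2 > sharpNorm y,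
      sharpNorm (fun ε => x ε * y ε) ≤ c1 * c2 := by
    intro c1 hc1 c2 hc2
    obtain ⟨b1, hb1, hxb⟩ := exists_Sx_of_lt hx hc1
    obtain ⟨b2, hb2, hyb⟩ := exists_Sx_of_lt hy hc2
    refine le_trans (sharpNorm_le_of_Sx (Sx_mul hxb hyb)) ?_
    rw [neg_add, Real.exp_add]
    exact mul_le_mul hb1.le hb2.le (Real.exp_pos _).le
      (le_trans (sharpNorm_nonneg x) hc1.le)
  have step1 : ∀ c2 > sharpNorm y, sharpNorm (fun ε => x ε * y ε) ≤ sharpNorm x * c2 := by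
    intro c2 hc2
    have hc2pos : 0 < c2 := lt_of_le_of_lt (sharpNorm_nonneg y) hc2
    have : ∀ c1 > sharpNorm x, sharpNorm (fun ε => x ε * y ε) / c2 ≤ c1 := by
      intro c1 hc1
      rw [div_le_iff₀ hc2pos]
      exact key c1 hc1 c2 hc2
    have := le_of_forall_gt_imp_ge_of_dense this
    calc sharpNorm (fun ε => x ε * y ε)
        = sharpNorm (fun ε => x ε * y ε) / c2 * c2 := by field_simp
      _ ≤ sharpNorm x * c2 := mul_le_mul_of_nonneg_right this hc2pos.le
  rcases eq_or_lt_of_le (sharpNorm_nonneg x) with hx0 | hx0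
  · have := step1 (sharpNorm y + 1) (by linarith)
    rw [← hx0, zero_mul] at this ⊢
    simpa using this
  · have : ∀ c2 > sharpNorm y, sharpNorm (fun ε => x ε * y ε) / sharpNorm x ≤ c2 := by
      intro c2 hc2
      rw [div_le_iff₀ hx0]
      calc sharpNorm (fun ε => x ε * y ε) ≤ sharpNorm x * c2 := step1 c2 hc2
        _ = c2 * sharpNorm x := mul_comm _ _
    have := le_of_forall_gt_imp_ge_of_dense this
    calc sharpNorm (fun ε => x ε * y ε)
        = sharpNorm (fun ε => x ε * y ε) / sharpNorm x * sharpNorm x := by field_simp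
      _ ≤ sharpNorm y * sharpNorm x := mul_le_mul_of_nonneg_right this hx0.le
      _ = sharpNorm x * sharpNorm y := mul_comm _ _

lemma sharpNorm_one_le : sharpNorm (fun _ : ℝ => (1 : ℂ)) ≤ 1 := by
  have : Sx (fun _ : ℝ => (1 : ℂ)) 0 := by
    filter_upwards [self_mem_nhdsWithin] with ε hε
    simp [Real.rpow_zero]
  simpa using sharpNorm_le_of_Sx this

lemma sharpNorm_pow_le {z : ℝ → ℂ} (hz : Moderate z) (n : ℕ) :
    sharpNorm (fun ε => z ε ^ n) ≤ sharpNorm z ^ n := by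
  induction n with
  | zero => simpa using sharpNorm_one_le
  | succ k ih =>
    have h1 : sharpNorm (fun ε => z ε ^ k * z ε) ≤ sharpNorm (fun ε => z ε ^ k) * sharpNorm z :=
      sharpNorm_mul_le (moderate_pow hz k) hz
    have h2 : sharpNorm (fun ε => z ε ^ k) * sharpNorm z ≤ sharpNorm z ^ k * sharpNorm z :=
      mul_le_mul_of_nonneg_right ih (sharpNorm_nonneg z)
    calc sharpNorm (fun ε => z ε ^ (k+1)) = sharpNorm (fun ε => z ε ^ k * z ε) := by
          simp only [pow_succ]
      _ ≤ sharpNorm z ^ k * sharpNorm z := le_trans h1 h2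
      _ = sharpNorm z ^ (k+1) := (pow_succ _ _).symm

lemma sharpNorm_one : sharpNorm (fun _ : ℝ => (1 : ℂ)) = 1 := by
  refine le_antisymm sharpNorm_one_le ?_
  rw [sharpNorm_eq]
  refine le_csInf ⟨1, 0, by simp, by
    filter_upwards [self_mem_nhdsWithin] with ε hε; simp [Real.rpow_zero]⟩ ?_
  rintro r ⟨b, rfl, hb⟩
  -- hb : ∀ᶠ ε, 1 ≤ ε ^ b ; need b ≤ 0
  have hb0 : b ≤ 0 := by
    by_contra hc
    push_neg at hc
    have h2 : ∀ᶠ ε in 𝓝[>] (0:ℝ), ε ^ b ≤ 1/2 := ev_rpow_le hc (by norm_num)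
    have h3 : ∀ᶠ ε in 𝓝[>] (0:ℝ), False := by
      filter_upwards [hb, h2] with ε e1 e2
      simp only [norm_one] at e1
      linarith
    exact (nhdsGT_neBot (0:ℝ)).ne' (by
      simpa using h3.frequently.exists |>.elim)
  calc (1:ℝ) = Real.exp 0 := Real.exp_zero.symm
    _ ≤ Real.exp (-b) := Real.exp_le_exp.mpr (by linarith)

lemma negligible_mul_moderate {u c : ℝ → ℂ} (hu : Negligible u) (hc : Moderate c) :
    Negligible (fun ε => c ε * u ε) := by
  rw [negligible_iff_Sx] at hu ⊢
  obtain ⟨b0, hb0⟩ := moderate_iff_Sx.mp hc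
  intro b
  have := Sx_mul hb0 (hu (b - b0))
  simpa using this

end Aux

namespace Aux

lemma geom_tail_le {r : ℝ} (h0 : 0 ≤ r) (h2 : r ≤ 1/2) (k M : ℕ) :
    ∑ n ∈ Finset.Ico k M, r ^ n ≤ 2 * r ^ k := by
  by_cases hkM : k ≤ M
  · rw [Finset.sum_Ico_eq_sum_range]
    have : ∀ n : ℕ, r ^ (k + n) = r ^ k * r ^ n := fun n => pow_add r k n
    simp_rw [this, ← Finset.mul_sum]
    have hsum : ∑ n ∈ Finset.range (M - k), r ^ n ≤ 2 := by
      refine le_trans (Finset.sum_le_sum fun n _ => pow_le_pow_left₀ h0 h2 n) ?_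
      exact sum_geometric_two_le _
    calc r ^ k * ∑ n ∈ Finset.range (M - k), r ^ n ≤ r ^ k * 2 :=
          mul_le_mul_of_nonneg_left hsum (pow_nonneg h0 k)
      _ = 2 * r ^ k := mul_comm _ _
  · rw [Finset.Ico_eq_empty (by omega)]
    simp only [Finset.sum_empty]
    positivity

lemma series_complete (u : ℕ → ℝ → ℂ) (hu : ∀ n, Moderate (u n)) {q : ℝ}
    (hq0 : 0 < q) (hq1 : q < 1) (N : ℕ) (hb : ∀ n, N ≤ n → sharpNorm (u n) ≤ q ^ n) :
    ∃ s : ℝ → ℂ, Moderate s ∧ ∀ m, N ≤ m →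
      sharpNorm (fun ε => (∑ n ∈ Finset.range m, u n ε) - s ε) ≤ q ^ m := by
  classical
  set β := -Real.log q with hβdef
  have hβpos : 0 < β := by
    have := Real.log_neg hq0 hq1
    rw [hβdef]; linarith
  have hqexp : ∀ n : ℕ, q ^ n = Real.exp (-(β * n)) := by
    intro n
    rw [hβdef, neg_mul, neg_neg, mul_comm, Real.exp_nat_mul, Real.exp_log hq0]
  have hSx : ∀ n, N ≤ n → Sx (u n) (β * n - 1) := by
    intro n hn
    exact Sx_of_le (hu n) (by rw [← hqexp n]; exact hb n hn) (by linarith)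
  have hthr : ∀ n : ℕ, ∃ e : ℝ, 0 < e ∧
      (N ≤ n → ∀ ε : ℝ, 0 < ε → ε ≤ e → ‖u n ε‖ ≤ ε ^ (β * n - 1)) := by
    intro n
    by_cases hn : N ≤ n
    · obtain ⟨e, he0, he1, he⟩ := (evSmall_iff _).mpr (hSx n hn)
      exact ⟨e, he0, fun _ => he⟩
    · exact ⟨1, one_pos, fun h => absurd h hn⟩
  choose η hη0 hηspec using hthr
  set δ : ℕ → ℝ := fun n =>
    Nat.rec (motive := fun _ => ℝ) (min (1/2) (η 0)) (fun k d => min (d/2) (η (k+1))) n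
    with hδdef
  have hδ0 : δ 0 = min (1/2) (η 0) := rfl
  have hδs : ∀ k, δ (k+1) = min (δ k / 2) (η (k+1)) := fun _ => rfl
  have hδpos : ∀ n, 0 < δ n := by
    intro n
    induction n with
    | zero => rw [hδ0]; exact lt_min (by norm_num) (hη0 0)
    | succ k ih => rw [hδs]; exact lt_min (by linarith) (hη0 _)
  have hδη : ∀ n, δ n ≤ η n := by
    intro n
    cases n with
    | zero => rw [hδ0]; exact min_le_right _ _
    | succ k => rw [hδs]; exact min_le_right _ _
  have hδanti : Antitone δ := by
    refine antitone_nat_of_succ_le fun n => ?_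
    rw [hδs]
    exact le_trans (min_le_left _ _) (by linarith [hδpos n])
  have hδsmall : ∀ n, δ n ≤ (1/2) ^ (n + 1) := by
    intro n
    induction n with
    | zero => rw [hδ0]; simpa using min_le_left _ _
    | succ k ih =>
      rw [hδs]
      refine le_trans (min_le_left _ _) ?_
      rw [pow_succ]
      calc δ k / 2 ≤ (1/2)^(k+1) / 2 := by linarith
        _ = (1/2)^(k+1) * (1/2) := by ring
  have hex : ∀ ε : ℝ, 0 < ε → ∃ n, δ n < ε := by
    intro ε hε
    obtain ⟨n, hn⟩ := exists_pow_lt_of_lt_one hε (show (1:ℝ)/2 < 1 by norm_num)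
    refine ⟨n, lt_of_le_of_lt (le_trans (hδsmall n) ?_) hn⟩
    exact pow_le_pow_of_le_one (by norm_num) (by norm_num) (Nat.le_succ n)
  set s : ℝ → ℂ := fun ε =>
    if h : 0 < ε then ∑ n ∈ Finset.range (Nat.find (hex ε h)), u n ε else 0 with hsdef
  have hm1 : ∀ (ε : ℝ) (h : 0 < ε) (k : ℕ), ε ≤ δ k → k < Nat.find (hex ε h) := by
    intro ε h k hk
    rw [Nat.lt_find_iff]
    intro j hj
    exact not_lt.mpr (le_trans hk (hδanti hj))
  have hm2 : ∀ (ε : ℝ) (h : 0 < ε) (n : ℕ), n < Nat.find (hex ε h) → ε ≤ δ n :=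
    fun ε h n hn => not_lt.mp (Nat.find_min (hex ε h) hn)
  have hkey : ∀ k, N ≤ k →
      Sx (fun ε => s ε - ∑ n ∈ Finset.range k, u n ε) (β * k - 2) := by
    intro k hk
    filter_upwards [ev_le (hδpos k), ev_rpow_le hβpos (show (0:ℝ) < 1/2 by norm_num),
      ev_absorb 2 (show β * k - 2 < β * k - 1 by linarith), self_mem_nhdsWithin]
      with ε hεδ hεβ habs hε
    have hε : (0:ℝ) < ε := hε
    have hfind := hm1 ε hε k hεδ
    have hse : s ε = ∑ n ∈ Finset.range (Nat.find (hex ε hε)), u n ε := dif_pos hε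
    set M := Nat.find (hex ε hε) with hMdef
    have hterm : ∀ n : ℕ, ε ^ (β * n - 1) = ε ^ (-1:ℝ) * (ε ^ β) ^ n := by
      intro n
      rw [← Real.rpow_natCast (ε ^ β) n, ← Real.rpow_mul hε.le, ← Real.rpow_add hε]
      ring_nf
    have hsum : s ε - ∑ n ∈ Finset.range k, u n ε = ∑ n ∈ Finset.Ico k M, u n ε := by
      rw [hse, Finset.sum_Ico_eq_sub _ (le_of_lt hfind)]
    rw [hsum]
    calc ‖∑ n ∈ Finset.Ico k M, u n ε‖ ≤ ∑ n ∈ Finset.Ico k M, ‖u n ε‖ := norm_sum_le _ _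
      _ ≤ ∑ n ∈ Finset.Ico k M, ε ^ (β * n - 1) := by
          refine Finset.sum_le_sum fun n hn => ?_
          obtain ⟨hn1, hn2⟩ := Finset.mem_Ico.mp hn
          exact hηspec n (le_trans hk hn1) ε hε (le_trans (hm2 ε hε n hn2) (hδη n))
      _ = ∑ n ∈ Finset.Ico k M, ε ^ (-1:ℝ) * (ε ^ β) ^ n := by
          exact Finset.sum_congr rfl fun n _ => hterm n
      _ = ε ^ (-1:ℝ) * ∑ n ∈ Finset.Ico k M, (ε ^ β) ^ n := by rw [Finset.mul_sum]
      _ ≤ ε ^ (-1:ℝ) * (2 * (ε ^ β) ^ k) := by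
          exact mul_le_mul_of_nonneg_left
            (geom_tail_le (Real.rpow_nonneg hε.le β) hεβ k M)
            (Real.rpow_nonneg hε.le _)
      _ = 2 * ε ^ (β * k - 1) := by rw [hterm k]; ring
      _ ≤ ε ^ (β * k - 2) := habs
  have hSmod : ∀ m : ℕ, Moderate (fun ε => ∑ n ∈ Finset.range m, u n ε) :=
    fun m => moderate_finsetSum _ _ fun n _ => hu n
  have hsmod : Moderate s := by
    have h1 : Moderate (fun ε => s ε - ∑ n ∈ Finset.range N, u n ε) :=
      moderate_of_Sx (hkey N le_rfl)
    have := moderate_add h1 (hSmod N)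
    simpa using this
  refine ⟨s, hsmod, fun m hm => ?_⟩
  refine le_of_forall_gt_imp_ge_of_dense fun c hc => ?_
  have ht : 0 < c - q ^ m := by linarith
  have htend : Filter.Tendsto (fun k : ℕ => Real.exp 2 * q ^ k) Filter.atTop (nhds 0) := by
    have := (tendsto_pow_atTop_nhds_zero_of_lt_one hq0.le hq1).const_mul (Real.exp 2)
    simpa using this
  obtain ⟨k, hkt, hkm⟩ :=
    ((htend.eventually (gt_mem_nhds ht)).and (Filter.eventually_ge_atTop (max m N))).exists
  have hmk : m ≤ k := le_trans (le_max_left _ _) hkm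
  have hNk : N ≤ k := le_trans (le_max_right _ _) hkm
  have heq : (fun ε => (∑ n ∈ Finset.range m, u n ε) - s ε)
      = fun ε => ((∑ n ∈ Finset.range m, u n ε) - ∑ n ∈ Finset.range k, u n ε)
          + ((∑ n ∈ Finset.range k, u n ε) - s ε) := by
    funext ε; rw [sub_add_sub_cancel]
  have h1 : sharpNorm (fun ε => (∑ n ∈ Finset.range m, u n ε)
      - ∑ n ∈ Finset.range k, u n ε) ≤ q ^ m := by
    have heq2 : (fun ε => (∑ n ∈ Finset.range m, u n ε) - ∑ n ∈ Finset.range k, u n ε)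
        = fun ε => -(∑ n ∈ Finset.Ico m k, u n ε) := by
      funext ε
      rw [Finset.sum_Ico_eq_sub _ hmk]
      ring
    rw [heq2, sharpNorm_neg]
    refine sharpNorm_finsetSum_le _ _ (pow_nonneg hq0.le m) (fun n _ => hu n) fun n hn => ?_
    obtain ⟨hn1, -⟩ := Finset.mem_Ico.mp hn
    exact le_trans (hb n (le_trans hm hn1)) (pow_le_pow_of_le_one hq0.le hq1.le hn1)
  have h2 : sharpNorm (fun ε => (∑ n ∈ Finset.range k, u n ε) - s ε) ≤ Real.exp 2 * q ^ k := by
    have heq3 : (fun ε => (∑ n ∈ Finset.range k, u n ε) - s ε)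
        = fun ε => -(s ε - ∑ n ∈ Finset.range k, u n ε) := by
      funext ε; ring
    rw [heq3, sharpNorm_neg]
    have := sharpNorm_le_of_Sx (hkey k hNk)
    calc sharpNorm (fun ε => s ε - ∑ n ∈ Finset.range k, u n ε)
        ≤ Real.exp (-(β * k - 2)) := this
      _ = Real.exp 2 * q ^ k := by
          rw [hqexp k, ← Real.exp_add]; ring_nf
  calc sharpNorm (fun ε => (∑ n ∈ Finset.range m, u n ε) - s ε)
      ≤ max (sharpNorm (fun ε => (∑ n ∈ Finset.range m, u n ε)
          - ∑ n ∈ Finset.range k, u n ε))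
        (sharpNorm (fun ε => (∑ n ∈ Finset.range k, u n ε) - s ε)) := by
        rw [heq]
        exact sharpNorm_add_le (moderate_sub (hSmod m) (hSmod k)) (moderate_sub (hSmod k) hsmod)
    _ ≤ max (q ^ m) (c - q ^ m) := max_le_max h1 (le_trans h2 hkt.le)
    _ ≤ c := max_le (by linarith) (by linarith [pow_nonneg hq0.le m])

end Aux

namespace Aux

lemma exists_q (a : ℕ → ℝ → ℂ) {r : ℝ} (hr : 0 ≤ r)
    (h : ENNReal.ofReal r < convRadius a) :
    ∃ q : ℝ, 0 < q ∧ q < 1 ∧ ∃ N : ℕ, ∀ n, N ≤ n → sharpNorm (a n) * r ^ n ≤ q ^ n := by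
  rcases eq_or_lt_of_le hr with hr0 | hrpos
  · refine ⟨1/2, by norm_num, by norm_num, 1, fun n hn => ?_⟩
    rw [← hr0, zero_pow (by omega), mul_zero]
    positivity
  set L := Filter.limsup (fun n => ENNReal.ofReal (sharpNorm (a n) ^ (1 / (n : ℝ))))
      Filter.atTop with hLdef
  have hL : L < (ENNReal.ofReal r)⁻¹ := by
    rw [← ENNReal.lt_inv_iff_lt_inv]
    exact h
  obtain ⟨c, hc1, hc2⟩ := exists_between hL
  have hcne : c ≠ ⊤ := ne_top_of_lt hc2
  have hcpos : 0 < c := lt_of_le_of_lt (zero_le : 0 ≤ L) hc1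
  set ρ := c.toReal with hρdef
  have hρpos : 0 < ρ := ENNReal.toReal_pos hcpos.ne' hcne
  have hcρ : ENNReal.ofReal ρ = c := ENNReal.ofReal_toReal hcne
  have hρr : ρ * r < 1 := by
    have h1 : c < ENNReal.ofReal r⁻¹ := by
      rwa [ENNReal.ofReal_inv_of_pos hrpos]
    rw [← hcρ] at h1
    have h2 : ρ < r⁻¹ := (ENNReal.ofReal_lt_ofReal_iff_of_nonneg hρpos.le).mp h1
    rw [show r⁻¹ = 1 / r by rw [one_div]] at h2
    exact (lt_div_iff₀ hrpos).mp h2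
  have hev : ∀ᶠ n in Filter.atTop,
      ENNReal.ofReal (sharpNorm (a n) ^ (1 / (n : ℝ))) < c :=
    Filter.eventually_lt_of_limsup_lt hc1
  obtain ⟨N, hN⟩ := Filter.eventually_atTop.mp (hev.and (Filter.eventually_ge_atTop 1))
  refine ⟨ρ * r, mul_pos hρpos hrpos, hρr, N, fun n hn => ?_⟩
  obtain ⟨h1, h2⟩ := hN n hn
  have hx0 : (0:ℝ) ≤ sharpNorm (a n) := sharpNorm_nonneg _
  have h3 : sharpNorm (a n) ^ (1/(n:ℝ)) < ρ := by
    rw [← hcρ] at h1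
    exact (ENNReal.ofReal_lt_ofReal_iff_of_nonneg (Real.rpow_nonneg hx0 _)).mp h1
  have h4 : sharpNorm (a n) < ρ ^ n := by
    have h5 := pow_lt_pow_left₀ h3 (Real.rpow_nonneg hx0 _) (by omega : n ≠ 0)
    rwa [one_div, Real.rpow_inv_natCast_pow hx0 (by omega)] at h5
  calc sharpNorm (a n) * r ^ n ≤ ρ ^ n * r ^ n :=
        mul_le_mul_of_nonneg_right h4.le (pow_nonneg hr n)
    _ = (ρ * r) ^ n := (mul_pow ρ r n).symm

end Aux

namespace Aux

lemma freq_lower (a : ℕ → ℝ → ℂ) {h : ℝ} (h0 : 0 ≤ h)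
    (hlt : ENNReal.ofReal h < (convRadius a)⁻¹) :
    ∃ ρ : ℝ, h < ρ ∧ ∃ᶠ n in Filter.atTop, 1 ≤ n ∧ ρ ^ n < sharpNorm (a n) := by
  rw [convRadius, inv_inv] at hlt
  obtain ⟨c, hc1, hc2⟩ := exists_between hlt
  have hcne : c ≠ ⊤ := ne_top_of_lt hc2
  set ρ := c.toReal with hρdef
  have hcρ : ENNReal.ofReal ρ = c := ENNReal.ofReal_toReal hcne
  have hρh : h < ρ := by
    rw [← hcρ] at hc1
    exact (ENNReal.ofReal_lt_ofReal_iff_of_nonneg h0).mp hc1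
  have hρ0 : 0 ≤ ρ := ENNReal.toReal_nonneg
  have hfreq := Filter.frequently_lt_of_lt_limsup (by isBoundedDefault) hc2
  refine ⟨ρ, hρh, ?_⟩
  refine (hfreq.and_eventually (Filter.eventually_ge_atTop 1)).mono fun n hn => ⟨hn.2, ?_⟩
  have hx0 : (0:ℝ) ≤ sharpNorm (a n) := sharpNorm_nonneg _
  have h1 : ρ < sharpNorm (a n) ^ (1/(n:ℝ)) := by
    have := hn.1
    rw [← hcρ] at this
    exact (ENNReal.ofReal_lt_ofReal_iff_of_nonneg hρ0).mp this
  have h5 := pow_lt_pow_left₀ h1 hρ0 (by omega : n ≠ 0)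
  rwa [one_div, Real.rpow_inv_natCast_pow hx0 (by omega)] at h5

lemma tendsto_of_pow_bound {T : ℕ → ℝ} {q : ℝ} (hq0 : 0 ≤ q) (hq1 : q < 1) (N : ℕ)
    (h0 : ∀ m, 0 ≤ T m) (hb : ∀ m, N ≤ m → T m ≤ q ^ m) :
    Filter.Tendsto T Filter.atTop (nhds 0) :=
  squeeze_zero' (Filter.Eventually.of_forall h0) (Filter.eventually_atTop.mpr ⟨N, hb⟩)
    (tendsto_pow_atTop_nhds_zero_of_lt_one hq0 hq1)

end Aux


end AuxSection

open Aux Topology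

/-- Lemma 4.15: convergence of power series with coefficients in `C̃`. -/
theorem power_series_convergence_radius (a : ℕ → ℝ → ℂ) (ha : ∀ n, Moderate (a n)) :
    -- convergence for ‖z̃‖ < R
    (∀ z : ℝ → ℂ, Moderate z → ENNReal.ofReal (sharpNorm z) < convRadius a →
      ∃ s : ℝ → ℂ, Moderate s ∧
        Filter.Tendsto
          (fun m => sharpNorm fun ε => (∑ n ∈ Finset.range m, a n ε * z ε ^ n) - s ε)
          Filter.atTop (nhds 0)) ∧
    -- divergence for invertible z̃ with ‖z̃⁻¹‖ < 1/R
    (∀ z w : ℝ → ℂ, Moderate z → Moderate w →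
      (Negligible fun ε => z ε * w ε - 1) →
      ENNReal.ofReal (sharpNorm w) < (convRadius a)⁻¹ →
      ¬ ∃ s : ℝ → ℂ, Moderate s ∧
        Filter.Tendsto
          (fun m => sharpNorm fun ε => (∑ n ∈ Finset.range m, a n ε * z ε ^ n) - s ε)
          Filter.atTop (nhds 0)) ∧
    -- uniform convergence on every ball of radius r < R
    (∀ r : ℝ, 0 ≤ r → ENNReal.ofReal r < convRadius a →
      ∃ s : (ℝ → ℂ) → ℝ → ℂ,
        (∀ z : ℝ → ℂ, Moderate z → sharpNorm z ≤ r → Moderate (s z) ∧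
          Filter.Tendsto
            (fun m => sharpNorm fun ε => (∑ n ∈ Finset.range m, a n ε * z ε ^ n) - s z ε)
            Filter.atTop (nhds 0)) ∧
        ∀ δ : ℝ, 0 < δ → ∃ M : ℕ, ∀ m ≥ M, ∀ z : ℝ → ℂ, Moderate z → sharpNorm z ≤ r →
          sharpNorm (fun ε => (∑ n ∈ Finset.range m, a n ε * z ε ^ n) - s z ε) < δ) := by
  refine ⟨?_, ?_, ?_⟩
  · -- Part 1: convergence
    intro z hz hlt
    obtain ⟨q, hq0, hq1, N, hqb⟩ := exists_q a (sharpNorm_nonneg z) hlt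
    have hu : ∀ n, Moderate (fun ε => a n ε * z ε ^ n) :=
      fun n => moderate_mul (ha n) (moderate_pow hz n)
    have hub : ∀ n, N ≤ n → sharpNorm (fun ε => a n ε * z ε ^ n) ≤ q ^ n := by
      intro n hn
      calc sharpNorm (fun ε => a n ε * z ε ^ n)
          ≤ sharpNorm (a n) * sharpNorm (fun ε => z ε ^ n) :=
            sharpNorm_mul_le (ha n) (moderate_pow hz n)
        _ ≤ sharpNorm (a n) * sharpNorm z ^ n :=
            mul_le_mul_of_nonneg_left (sharpNorm_pow_le hz n) (sharpNorm_nonneg _)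
        _ ≤ q ^ n := hqb n hn
    obtain ⟨s, hsmod, hs⟩ := series_complete _ hu hq0 hq1 N hub
    exact ⟨s, hsmod, tendsto_of_pow_bound hq0.le hq1 N (fun m => sharpNorm_nonneg _) hs⟩
  · -- Part 2: divergence
    intro z w hz hw hzw hlt
    rintro ⟨s, hsmod, hs⟩
    -- sharpNorm w > 0
    have honeeq : sharpNorm (fun ε => z ε * w ε) = 1 := by
      have h0 := sharpNorm_add_negligible moderate_one hzw
      have heq : (fun ε => (1:ℂ) + (z ε * w ε - 1)) = fun ε => z ε * w ε :=
        funext fun ε => by ring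
      rw [heq, sharpNorm_one] at h0
      exact h0
    have h1le : (1:ℝ) ≤ sharpNorm z * sharpNorm w := by
      rw [← honeeq]
      exact sharpNorm_mul_le hz hw
    have hwpos : 0 < sharpNorm w := by
      rcases (sharpNorm_nonneg w).lt_or_eq with h | h
      · exact h
      · rw [← h, mul_zero] at h1le; linarith
    obtain ⟨ρ, hρ, hfreq⟩ := freq_lower a (sharpNorm_nonneg w) hlt
    have hρpos : 0 < ρ := lt_of_le_of_lt (sharpNorm_nonneg w) hρ
    -- eventually terms are small
    set S : ℕ → ℝ → ℂ := fun m ε => ∑ n ∈ Finset.range m, a n ε * z ε ^ n with hSdef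
    have hSmod : ∀ m, Moderate (S m) :=
      fun m => moderate_finsetSum _ _ fun n _ => moderate_mul (ha n) (moderate_pow hz n)
    obtain ⟨M, hM⟩ := Filter.eventually_atTop.mp
      (hs.eventually (gt_mem_nhds (show (0:ℝ) < 1/2 by norm_num)))
    have hev : ∀ n, M ≤ n → sharpNorm (fun ε => a n ε * z ε ^ n) < 1 := by
      intro n hn
      have heq : (fun ε => a n ε * z ε ^ n)
          = fun ε => (S (n+1) ε - s ε) + -(S n ε - s ε) := by
        funext ε
        rw [hSdef]
        simp only [Finset.sum_range_succ]
        ring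
      rw [heq]
      refine lt_of_le_of_lt (sharpNorm_add_le (moderate_sub (hSmod (n+1)) hsmod)
        (moderate_neg (moderate_sub (hSmod n) hsmod))) ?_
      rw [sharpNorm_neg]
      have b1 := hM (n+1) (by omega)
      have b2 := hM n hn
      exact lt_of_le_of_lt (max_le b1.le b2.le) (by norm_num)
    -- frequently terms are large
    have hbig : ∀ n, 1 ≤ n → ρ ^ n < sharpNorm (a n) →
        1 < sharpNorm (fun ε => a n ε * z ε ^ n) := by
      intro n hn1 hbign
      -- sharpNorm (a n) ≤ sharpNorm (a n z^n) * sharpNorm w ^ n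
      have hngl : Negligible (fun ε => (z ε * w ε) ^ n - 1) := by
        have hgeom := negligible_mul_moderate hzw
          (moderate_finsetSum (Finset.range n) (fun i ε => (z ε * w ε) ^ i)
            (fun i _ => moderate_pow (moderate_mul hz hw) i))
        have heq : (fun ε => (∑ i ∈ Finset.range n, (z ε * w ε) ^ i) * (z ε * w ε - 1))
            = fun ε => (z ε * w ε) ^ n - 1 := funext fun ε => geom_sum_mul _ n
        rwa [heq] at hgeom
      have heqA : sharpNorm (fun ε => a n ε * (z ε * w ε) ^ n) = sharpNorm (a n) := by
        have h0 := sharpNorm_add_negligible (ha n) (negligible_mul_moderate hngl (ha n))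
        have heq : (fun ε => a n ε + a n ε * ((z ε * w ε) ^ n - 1))
            = fun ε => a n ε * (z ε * w ε) ^ n := funext fun ε => by ring
        rwa [heq] at h0
      have hsplit : sharpNorm (a n)
          ≤ sharpNorm (fun ε => a n ε * z ε ^ n) * sharpNorm w ^ n := by
        rw [← heqA]
        have heq : (fun ε => a n ε * (z ε * w ε) ^ n)
            = fun ε => (a n ε * z ε ^ n) * w ε ^ n := funext fun ε => by ring
        rw [heq]
        calc sharpNorm (fun ε => (a n ε * z ε ^ n) * w ε ^ n)
            ≤ sharpNorm (fun ε => a n ε * z ε ^ n) * sharpNorm (fun ε => w ε ^ n) :=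
              sharpNorm_mul_le (moderate_mul (ha n) (moderate_pow hz n)) (moderate_pow hw n)
          _ ≤ sharpNorm (fun ε => a n ε * z ε ^ n) * sharpNorm w ^ n :=
              mul_le_mul_of_nonneg_left (sharpNorm_pow_le hw n) (sharpNorm_nonneg _)
      have hwρ : sharpNorm w ^ n ≤ ρ ^ n := pow_le_pow_left₀ (sharpNorm_nonneg w) hρ.le n
      have hU0 : 0 ≤ sharpNorm (fun ε => a n ε * z ε ^ n) := sharpNorm_nonneg _
      nlinarith [pow_pos hρpos n]
    have hcontr := hfreq.and_eventually (Filter.eventually_ge_atTop M)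
    obtain ⟨n, ⟨hn1, hn2⟩, hn3⟩ := hcontr.exists
    exact absurd (hev n hn3) (not_lt.mpr (hbig n hn1 hn2).le)
  · -- Part 3: uniform convergence on the ball of radius r
    intro r hr hlt
    obtain ⟨q, hq0, hq1, N, hqb⟩ := exists_q a hr hlt
    have key : ∀ z : ℝ → ℂ, ∃ s : ℝ → ℂ, (Moderate z ∧ sharpNorm z ≤ r) →
        Moderate s ∧ ∀ m, N ≤ m →
          sharpNorm (fun ε => (∑ n ∈ Finset.range m, a n ε * z ε ^ n) - s ε) ≤ q ^ m := by
      intro z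
      by_cases hz : Moderate z ∧ sharpNorm z ≤ r
      · obtain ⟨hzm, hzr⟩ := hz
        have hub : ∀ n, N ≤ n → sharpNorm (fun ε => a n ε * z ε ^ n) ≤ q ^ n := by
          intro n hn
          calc sharpNorm (fun ε => a n ε * z ε ^ n)
              ≤ sharpNorm (a n) * sharpNorm (fun ε => z ε ^ n) :=
                sharpNorm_mul_le (ha n) (moderate_pow hzm n)
            _ ≤ sharpNorm (a n) * sharpNorm z ^ n :=
                mul_le_mul_of_nonneg_left (sharpNorm_pow_le hzm n) (sharpNorm_nonneg _)
            _ ≤ sharpNorm (a n) * r ^ n :=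
                mul_le_mul_of_nonneg_left
                  (pow_le_pow_left₀ (sharpNorm_nonneg z) hzr n) (sharpNorm_nonneg _)
            _ ≤ q ^ n := hqb n hn
        obtain ⟨s, h1, h2⟩ := series_complete _
          (fun n => moderate_mul (ha n) (moderate_pow hzm n)) hq0 hq1 N hub
        exact ⟨s, fun _ => ⟨h1, h2⟩⟩
      · exact ⟨0, fun h => absurd h hz⟩
    choose s hs using key
    refine ⟨s, ?_, ?_⟩
    · intro z hzm hzr
      obtain ⟨h1, h2⟩ := hs z ⟨hzm, hzr⟩
      exact ⟨h1, tendsto_of_pow_bound hq0.le hq1 N (fun m => sharpNorm_nonneg _) h2⟩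
    · intro δ hδ
      obtain ⟨M, hM1, hM2⟩ : ∃ M, N ≤ M ∧ q ^ M < δ := by
        obtain ⟨M, hM⟩ := (((tendsto_pow_atTop_nhds_zero_of_lt_one hq0.le hq1).eventually
          (gt_mem_nhds hδ)).and (Filter.eventually_ge_atTop N)).exists
        exact ⟨M, hM.2, hM.1⟩
      refine ⟨M, fun m hm z hzm hzr => ?_⟩
      have h2 := (hs z ⟨hzm, hzr⟩).2 m (le_trans hM1 hm)
      calc sharpNorm (fun ε => (∑ n ∈ Finset.range m, a n ε * z ε ^ n) - s z ε)
          ≤ q ^ m := h2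
        _ ≤ q ^ M := pow_le_pow_of_le_one hq0.le hq1.le hm
        _ < δ := hM2


end
end
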